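/- arXiv:1808.10303 — 4 statements merged into one kernel-verified Lean document; each statement's English description precedes it below -/
import Mathlib

section
/- Let K be a field with char K ≠ 2 and let 𝔤 be a Lie algebra over K. Then the ideal L(𝔤) of χ(𝔤) generated by the elements x − x^ψ (x ∈ 𝔤) is in fact generated as a Lie subalgebra by the set {x − x^ψ : x ∈ 𝔤}; that is, the Lie subalgebra of χ(𝔤) generated by {x − x^ψ : x ∈ 𝔤} equals the kernel of the homomorphism α: χ(𝔤) → 𝔤 determined by α(x) = α(x^ψ) = x. -/
/- Formalization of a statement from "Weak commutativity for Lie algebras"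
   (arXiv:1808.10303). All Lie algebras are over a fixed field `K` with `char K ≠ 2`. -/

universe u v w

set_option linter.unusedVariables false

section WeakCommutativity

variable (K : Type u) [Field K] (g : Type v) [LieRing g] [LieAlgebra K g]

/-- The image of `x ∈ g` (first copy) in the free Lie algebra on two copies of `g`. -/
noncomputable def ofl (x : g) : FreeLieAlgebra K (g ⊕ g) := FreeLieAlgebra.of K (Sum.inl x)

/-- The image of `xᵠ ∈ gᵠ` (second copy) in the free Lie algebra on two copies of `g`. -/
noncomputable def ofr (x : g) : FreeLieAlgebra K (g ⊕ g) := FreeLieAlgebra.of K (Sum.inr x)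

/-- Relators presenting `χ(g)` as a quotient of the free Lie algebra on the disjoint union of
two copies of (the underlying type of) `g`: the relations presenting the free Lie product
(coproduct) of `g` and its copy `gᵠ`, together with the weak commutativity relations
`⁅x, xᵠ⁆ = 0` for all `x ∈ g`. -/
def chiRelators : Set (FreeLieAlgebra K (g ⊕ g)) :=
  { z | (∃ x y : g, z = ofl K g (x + y) - ofl K g x - ofl K g y)
      ∨ (∃ (c : K) (x : g), z = ofl K g (c • x) - c • ofl K g x)
      ∨ (∃ x y : g, z = ofl K g ⁅x, y⁆ - ⁅ofl K g x, ofl K g y⁆)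
      ∨ (∃ x y : g, z = ofr K g (x + y) - ofr K g x - ofr K g y)
      ∨ (∃ (c : K) (x : g), z = ofr K g (c • x) - c • ofr K g x)
      ∨ (∃ x y : g, z = ofr K g ⁅x, y⁆ - ⁅ofr K g x, ofr K g y⁆)
      ∨ (∃ x : g, z = ⁅ofl K g x, ofr K g x⁆) }

/-- The ideal of relations defining `χ(g)`. -/
noncomputable def chiIdeal : LieIdeal K (FreeLieAlgebra K (g ⊕ g)) :=
  LieSubmodule.lieSpan K (FreeLieAlgebra K (g ⊕ g)) (chiRelators K g)

/-- Sidki's weak commutativity Lie algebra `χ(g)`: the quotient of the free Lie product of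
two isomorphic copies `g`, `gᵠ` of `g` by the ideal generated by the brackets `⁅x, xᵠ⁆`. -/
abbrev chi : Type (max u v) := FreeLieAlgebra K (g ⊕ g) ⧸ chiIdeal K g

/-- The canonical image of `x ∈ g` (first copy) in `χ(g)`. -/
noncomputable def chiι (x : g) : chi K g :=
  LieSubmodule.Quotient.mk (N := chiIdeal K g) (ofl K g x)

/-- The canonical image of `xᵠ` (the second copy of `x ∈ g`) in `χ(g)`. -/
noncomputable def chiψ (x : g) : chi K g :=
  LieSubmodule.Quotient.mk (N := chiIdeal K g) (ofr K g x)

/-- The ideal `L(g) ⊆ χ(g)`, generated by the elements `x - xᵠ` for `x ∈ g`. -/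
noncomputable def chiL : LieIdeal K (chi K g) :=
  LieSubmodule.lieSpan K (chi K g) (Set.range fun x : g => chiι K g x - chiψ K g x)

end WeakCommutativity

section Aux

variable {K : Type u} [Field K] {g : Type v} [LieRing g] [LieAlgebra K g]

private lemma mk_rel {z : FreeLieAlgebra K (g ⊕ g)} (h : z ∈ chiRelators K g) :
    (LieSubmodule.Quotient.mk (N := chiIdeal K g) z) = 0 :=
  LieSubmodule.Quotient.mk_eq_zero'.mpr (LieSubmodule.subset_lieSpan h)

private lemma chiι_add (x y : g) : chiι K g (x + y) = chiι K g x + chiι K g y := by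
  have h := mk_rel (K := K) (g := g) (Or.inl ⟨x, y, rfl⟩)
  rw [show (LieSubmodule.Quotient.mk (N := chiIdeal K g)
      (ofl K g (x + y) - ofl K g x - ofl K g y)) =
      chiι K g (x + y) - chiι K g x - chiι K g y from by
    simp [chiι, Submodule.Quotient.mk_sub]] at h
  rw [sub_sub, sub_eq_zero] at h
  exact h

private lemma chiψ_add (x y : g) : chiψ K g (x + y) = chiψ K g x + chiψ K g y := by
  have h := mk_rel (K := K) (g := g) (Or.inr (Or.inr (Or.inr (Or.inl ⟨x, y, rfl⟩))))
  rw [show (LieSubmodule.Quotient.mk (N := chiIdeal K g)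
      (ofr K g (x + y) - ofr K g x - ofr K g y)) =
      chiψ K g (x + y) - chiψ K g x - chiψ K g y from by
    simp [chiψ, Submodule.Quotient.mk_sub]] at h
  rw [sub_sub, sub_eq_zero] at h
  exact h

private lemma chiι_smul (c : K) (x : g) : chiι K g (c • x) = c • chiι K g x := by
  have h := mk_rel (K := K) (g := g) (Or.inr (Or.inl ⟨c, x, rfl⟩))
  rw [show (LieSubmodule.Quotient.mk (N := chiIdeal K g)
      (ofl K g (c • x) - c • ofl K g x)) =
      chiι K g (c • x) - c • chiι K g x from by
    simp [chiι, Submodule.Quotient.mk_sub, Submodule.Quotient.mk_smul]] at h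
  rw [sub_eq_zero] at h
  exact h

private lemma chiψ_smul (c : K) (x : g) : chiψ K g (c • x) = c • chiψ K g x := by
  have h := mk_rel (K := K) (g := g) (Or.inr (Or.inr (Or.inr (Or.inr (Or.inl ⟨c, x, rfl⟩)))))
  rw [show (LieSubmodule.Quotient.mk (N := chiIdeal K g)
      (ofr K g (c • x) - c • ofr K g x)) =
      chiψ K g (c • x) - c • chiψ K g x from by
    simp [chiψ, Submodule.Quotient.mk_sub, Submodule.Quotient.mk_smul]] at h
  rw [sub_eq_zero] at h
  exact h

private lemma chiι_lie (x y : g) : chiι K g ⁅x, y⁆ = ⁅chiι K g x, chiι K g y⁆ := by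
  have h := mk_rel (K := K) (g := g) (Or.inr (Or.inr (Or.inl ⟨x, y, rfl⟩)))
  rw [show (LieSubmodule.Quotient.mk (N := chiIdeal K g)
      (ofl K g ⁅x, y⁆ - ⁅ofl K g x, ofl K g y⁆)) =
      chiι K g ⁅x, y⁆ - ⁅chiι K g x, chiι K g y⁆ from by
    simp only [chiι, Submodule.Quotient.mk_sub, ← LieSubmodule.Quotient.mk_bracket]] at h
  rw [sub_eq_zero] at h
  exact h

private lemma chiψ_lie (x y : g) : chiψ K g ⁅x, y⁆ = ⁅chiψ K g x, chiψ K g y⁆ := by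
  have h := mk_rel (K := K) (g := g)
    (Or.inr (Or.inr (Or.inr (Or.inr (Or.inr (Or.inl ⟨x, y, rfl⟩))))))
  rw [show (LieSubmodule.Quotient.mk (N := chiIdeal K g)
      (ofr K g ⁅x, y⁆ - ⁅ofr K g x, ofr K g y⁆)) =
      chiψ K g ⁅x, y⁆ - ⁅chiψ K g x, chiψ K g y⁆ from by
    simp only [chiψ, Submodule.Quotient.mk_sub, ← LieSubmodule.Quotient.mk_bracket]] at h
  rw [sub_eq_zero] at h
  exact h

private lemma chi_lie_self (x : g) : ⁅chiι K g x, chiψ K g x⁆ = 0 := by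
  have h := mk_rel (K := K) (g := g) (Or.inr (Or.inr (Or.inr (Or.inr (Or.inr (Or.inr ⟨x, rfl⟩))))))
  rw [show (LieSubmodule.Quotient.mk (N := chiIdeal K g) ⁅ofl K g x, ofr K g x⁆)
      = ⁅chiι K g x, chiψ K g x⁆ from LieSubmodule.Quotient.mk_bracket _ _ _] at h
  exact h

private lemma chiι_zero : chiι K g 0 = 0 := by
  have := chiι_smul (K := K) (g := g) 0 0
  rwa [zero_smul, zero_smul] at this

private lemma chi_polar (x y : g) :
    ⁅chiι K g x, chiψ K g y⁆ = ⁅chiψ K g x, chiι K g y⁆ := by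
  have h : ⁅chiι K g (x + y), chiψ K g (x + y)⁆ = 0 := chi_lie_self _
  rw [chiι_add, chiψ_add, add_lie, lie_add, lie_add, chi_lie_self, chi_lie_self] at h
  have h' : ⁅chiι K g x, chiψ K g y⁆ + ⁅chiι K g y, chiψ K g x⁆ = 0 := by
    rw [← h]; abel
  have := eq_neg_of_add_eq_zero_left h'
  rw [this, ← lie_skew, neg_neg]

/-- Every element of a free Lie algebra lies in the Lie span of the generators. -/
private lemma free_mem_lieSpan {X : Type w} (w : FreeLieAlgebra K X) :
    w ∈ LieSubalgebra.lieSpan K (FreeLieAlgebra K X) (Set.range (FreeLieAlgebra.of K)) := by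
  set S := LieSubalgebra.lieSpan K (FreeLieAlgebra K X) (Set.range (FreeLieAlgebra.of K)) with hS
  let f : X → S := fun x => ⟨FreeLieAlgebra.of K x, LieSubalgebra.subset_lieSpan ⟨x, rfl⟩⟩
  have key : S.incl.comp (FreeLieAlgebra.lift K f) = LieHom.id := by
    apply FreeLieAlgebra.hom_ext
    intro x
    simp [f, LieSubalgebra.coe_incl]
  have h : S.incl ((FreeLieAlgebra.lift K f) w) = w := by
    rw [← LieHom.comp_apply, key]; rfl
  rw [← h]
  exact ((FreeLieAlgebra.lift K f) w).2

/-- `χ(g)` is generated as a Lie algebra by the images of the two copies of `g`. -/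
private lemma chi_gen (z : chi K g) :
    z ∈ LieSubalgebra.lieSpan K (chi K g)
      (Set.range (chiι K g) ∪ Set.range (chiψ K g)) := by
  obtain ⟨w, rfl⟩ := LieSubmodule.Quotient.surjective_mk' (chiIdeal K g) z
  set T := LieSubalgebra.lieSpan K (chi K g) (Set.range (chiι K g) ∪ Set.range (chiψ K g))
  have hmk : (LieSubmodule.Quotient.mk' (chiIdeal K g)) w
      = LieSubmodule.Quotient.mk (N := chiIdeal K g) w := rfl
  rw [hmk]
  refine LieSubalgebra.lieSpan_induction (R := K)
    (p := fun a _ => (LieSubmodule.Quotient.mk (N := chiIdeal K g) a) ∈ T)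
    ?_ ?_ ?_ ?_ ?_ (free_mem_lieSpan w)
  · rintro a ⟨(x | x), rfl⟩
    · exact LieSubalgebra.subset_lieSpan (Or.inl ⟨x, rfl⟩)
    · exact LieSubalgebra.subset_lieSpan (Or.inr ⟨x, rfl⟩)
  · show (LieSubmodule.Quotient.mk (N := chiIdeal K g) (0 : FreeLieAlgebra K (g ⊕ g))) ∈ T
    have : (LieSubmodule.Quotient.mk (N := chiIdeal K g) (0 : FreeLieAlgebra K (g ⊕ g))) = 0 :=
      Submodule.Quotient.mk_zero _
    rw [this]; exact T.zero_mem
  · intro a b _ _ ha hb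
    show (LieSubmodule.Quotient.mk (N := chiIdeal K g) (a + b)) ∈ T
    have : (LieSubmodule.Quotient.mk (N := chiIdeal K g) (a + b))
        = LieSubmodule.Quotient.mk (N := chiIdeal K g) a
          + LieSubmodule.Quotient.mk (N := chiIdeal K g) b :=
      Submodule.Quotient.mk_add _
    rw [this]; exact T.add_mem ha hb
  · intro r a _ ha
    show (LieSubmodule.Quotient.mk (N := chiIdeal K g) (r • a)) ∈ T
    have : (LieSubmodule.Quotient.mk (N := chiIdeal K g) (r • a))
        = r • LieSubmodule.Quotient.mk (N := chiIdeal K g) a :=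
      Submodule.Quotient.mk_smul _ _ _
    rw [this]; exact T.smul_mem r ha
  · intro a b _ _ ha hb
    show (LieSubmodule.Quotient.mk (N := chiIdeal K g) ⁅a, b⁆) ∈ T
    rw [LieSubmodule.Quotient.mk_bracket]
    exact T.lie_mem ha hb

end Aux

/-- The ideal `L(g)` of `χ(g)` generated by the elements `x - xᵠ` is in fact
generated as a Lie subalgebra by the set `{x - xᵠ : x ∈ g}`: the Lie subalgebra of `χ(g)`
generated by this set coincides with the kernel of the homomorphism `α : χ(g) → g`
determined by `α(x) = α(xᵠ) = x`. -/
theorem chi_L_generated_as_subalgebra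
    (K : Type u) [Field K] (hchar : ringChar K ≠ 2)
    (g : Type v) [LieRing g] [LieAlgebra K g]
    (α : chi K g →ₗ⁅K⁆ g)
    (hα : ∀ x : g, α (chiι K g x) = x)
    (hαψ : ∀ x : g, α (chiψ K g x) = x) :
    ((LieSubalgebra.lieSpan K (chi K g)
        (Set.range fun x : g => chiι K g x - chiψ K g x)) : Set (chi K g))
        = {z : chi K g | α z = 0} ∧
      (chiL K g : Set (chi K g)) = {z : chi K g | α z = 0} := by
  have h2 : (2 : K) ≠ 0 := Ring.two_ne_zero hchar
  set S := LieSubalgebra.lieSpan K (chi K g)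
    (Set.range fun x : g => chiι K g x - chiψ K g x) with hSdef
  -- generators are in S
  have hgen : ∀ x : g, chiι K g x - chiψ K g x ∈ S :=
    fun x => LieSubalgebra.subset_lieSpan ⟨x, rfl⟩
  -- key bracket identity
  have key : ∀ x y : g, ⁅chiι K g x + chiψ K g x, chiι K g y - chiψ K g y⁆
      = chiι K g ⁅x, y⁆ - chiψ K g ⁅x, y⁆ := by
    intro x y
    rw [chiι_lie, chiψ_lie, add_lie, lie_sub, lie_sub, chi_polar x y]
    abel
  -- brackets with `x + xᵠ` preserve S
  have husub : ∀ (x : g), ∀ s ∈ S, ⁅chiι K g x + chiψ K g x, s⁆ ∈ S := by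
    intro x s hs
    have : s ∈ S ∧ ⁅chiι K g x + chiψ K g x, s⁆ ∈ S := by
      refine LieSubalgebra.lieSpan_induction (R := K)
        (p := fun a _ => a ∈ S ∧ ⁅chiι K g x + chiψ K g x, a⁆ ∈ S) ?_ ?_ ?_ ?_ ?_ hs
      · rintro a ⟨y, rfl⟩
        exact ⟨hgen y, by rw [key x y]; exact hgen ⁅x, y⁆⟩
      · exact ⟨S.zero_mem, by rw [lie_zero]; exact S.zero_mem⟩
      · rintro a b _ _ ⟨haS, hau⟩ ⟨hbS, hbu⟩
        exact ⟨S.add_mem haS hbS, by rw [lie_add]; exact S.add_mem hau hbu⟩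
      · rintro r a _ ⟨haS, hab⟩
        exact ⟨S.smul_mem r haS, by rw [lie_smul]; exact S.smul_mem r hab⟩
      · rintro a b _ _ ⟨haS, hau⟩ ⟨hbS, hbu⟩
        refine ⟨S.lie_mem haS hbS, ?_⟩
        rw [leibniz_lie]
        exact S.add_mem (S.lie_mem hau hbS) (S.lie_mem haS hbu)
    exact this.2
  -- brackets with generators of χ(g) preserve S
  have hι : ∀ (x : g), ∀ s ∈ S, ⁅chiι K g x, s⁆ ∈ S := by
    intro x s hs
    have h1 : ⁅chiι K g x + chiψ K g x, s⁆ ∈ S := husub x s hs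
    have hd : ⁅chiι K g x - chiψ K g x, s⁆ ∈ S := S.lie_mem (hgen x) hs
    have heq : ⁅chiι K g x, s⁆ =
        (2 : K)⁻¹ • (⁅chiι K g x + chiψ K g x, s⁆ + ⁅chiι K g x - chiψ K g x, s⁆) := by
      rw [← add_lie]
      rw [show chiι K g x + chiψ K g x + (chiι K g x - chiψ K g x)
          = (2 : K) • chiι K g x from by rw [two_smul]; abel]
      rw [smul_lie, smul_smul, inv_mul_cancel₀ h2, one_smul]
    rw [heq]
    exact S.smul_mem _ (S.add_mem h1 hd)
  have hψ : ∀ (x : g), ∀ s ∈ S, ⁅chiψ K g x, s⁆ ∈ S := by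
    intro x s hs
    have h1 : ⁅chiι K g x + chiψ K g x, s⁆ ∈ S := husub x s hs
    have hd : ⁅chiι K g x - chiψ K g x, s⁆ ∈ S := S.lie_mem (hgen x) hs
    have heq : ⁅chiψ K g x, s⁆ =
        (2 : K)⁻¹ • (⁅chiι K g x + chiψ K g x, s⁆ - ⁅chiι K g x - chiψ K g x, s⁆) := by
      rw [← sub_lie]
      rw [show chiι K g x + chiψ K g x - (chiι K g x - chiψ K g x)
          = (2 : K) • chiψ K g x from by rw [two_smul]; abel]
      rw [smul_lie, smul_smul, inv_mul_cancel₀ h2, one_smul]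
    rw [heq]
    exact S.smul_mem _ (S.sub_mem h1 hd)
  -- S is an ideal: brackets with arbitrary elements preserve S
  have hid : ∀ z : chi K g, ∀ s ∈ S, ⁅z, s⁆ ∈ S := by
    intro z
    refine LieSubalgebra.lieSpan_induction (R := K)
      (p := fun a _ => ∀ s ∈ S, ⁅a, s⁆ ∈ S) ?_ ?_ ?_ ?_ ?_ (chi_gen z)
    · rintro a (⟨x, rfl⟩ | ⟨x, rfl⟩)
      · exact hι x
      · exact hψ x
    · intro s hs; rw [zero_lie]; exact S.zero_mem
    · intro a b _ _ ha hb s hs; rw [add_lie]; exact S.add_mem (ha s hs) (hb s hs)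
    · intro r a _ ha s hs; rw [smul_lie]; exact S.smul_mem r (ha s hs)
    · intro a b _ _ ha hb s hs
      rw [lie_lie]
      exact S.sub_mem (ha _ (hb s hs)) (hb _ (ha s hs))
  -- every element decomposes as (element of S) + chiι (α z)
  have hdec : ∀ z : chi K g, z - chiι K g (α z) ∈ S := by
    intro z
    refine LieSubalgebra.lieSpan_induction (R := K)
      (p := fun a _ => a - chiι K g (α a) ∈ S) ?_ ?_ ?_ ?_ ?_ (chi_gen z)
    · rintro a (⟨x, rfl⟩ | ⟨x, rfl⟩)
      · rw [hα x, sub_self]; exact S.zero_mem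
      · rw [hαψ x, show chiψ K g x - chiι K g x = -(chiι K g x - chiψ K g x) from by abel]
        exact S.neg_mem (hgen x)
    · show (0 : chi K g) - chiι K g (α 0) ∈ S
      rw [map_zero α, chiι_zero, sub_zero]; exact S.zero_mem
    · intro a b _ _ ha hb
      show a + b - chiι K g (α (a + b)) ∈ S
      rw [map_add α, chiι_add, show a + b - (chiι K g (α a) + chiι K g (α b))
          = (a - chiι K g (α a)) + (b - chiι K g (α b)) from by abel]
      exact S.add_mem ha hb
    · intro r a _ ha
      show r • a - chiι K g (α (r • a)) ∈ S
      rw [map_smul α, chiι_smul, ← smul_sub]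
      exact S.smul_mem r ha
    · intro a b _ _ ha hb
      show ⁅a, b⁆ - chiι K g (α ⁅a, b⁆) ∈ S
      rw [LieHom.map_lie, chiι_lie]
      rw [show ⁅a, b⁆ - ⁅chiι K g (α a), chiι K g (α b)⁆
          = ⁅a - chiι K g (α a), b⁆ + ⁅chiι K g (α a), b - chiι K g (α b)⁆ from by
        rw [sub_lie, lie_sub]; abel]
      refine S.add_mem ?_ (hid _ _ hb)
      rw [← lie_skew]
      exact S.neg_mem (hid b _ ha)
  -- S ⊆ ker α
  have hS0 : ∀ s ∈ S, α s = 0 := by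
    intro s hs
    refine LieSubalgebra.lieSpan_induction (R := K) (p := fun a _ => α a = 0) ?_ ?_ ?_ ?_ ?_ hs
    · rintro a ⟨x, rfl⟩
      show α (chiι K g x - chiψ K g x) = 0
      rw [map_sub α, hα x, hαψ x, sub_self]
    · exact α.map_zero
    · intro a b _ _ ha hb; show α (a + b) = 0; rw [map_add α, ha, hb, add_zero]
    · intro r a _ ha; show α (r • a) = 0; rw [map_smul α, ha, smul_zero]
    · intro a b _ _ ha hb; show α ⁅a, b⁆ = 0; rw [LieHom.map_lie, ha, hb, lie_zero]
  -- first equality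
  have hSeq : (S : Set (chi K g)) = {z : chi K g | α z = 0} := by
    ext z
    constructor
    · intro hz; exact hS0 z hz
    · intro hz
      have := hdec z
      rw [show α z = 0 from hz, chiι_zero, sub_zero] at this
      exact this
  refine ⟨hSeq, ?_⟩
  -- second equality: L = ker α
  have hSL : ∀ s ∈ S, s ∈ chiL K g := by
    intro s hs
    refine LieSubalgebra.lieSpan_induction (R := K) (p := fun a _ => a ∈ chiL K g) ?_ ?_ ?_ ?_ ?_ hs
    · intro a ha; exact LieSubmodule.subset_lieSpan ha
    · exact (chiL K g).zero_mem
    · intro a b _ _ ha hb; exact (chiL K g).add_mem ha hb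
    · intro r a _ ha; exact (chiL K g).smul_mem r ha
    · intro a b _ _ ha hb; exact (chiL K g).lie_mem hb
  have hLker : chiL K g ≤ α.ker := by
    rw [chiL, LieSubmodule.lieSpan_le]
    rintro a ⟨x, rfl⟩
    show chiι K g x - chiψ K g x ∈ α.ker
    rw [LieHom.mem_ker, map_sub α, hα x, hαψ x, sub_self]
  ext z
  constructor
  · intro hz
    exact LieHom.mem_ker.mp (hLker hz)
  · intro hz
    have hzS : z ∈ S := by rw [← hSeq] at hz; exact hz
    exact hSL z hzS
end

section
/- Let K be a field with char K ≠ 2 and let 𝔤 be a Lie algebra over K. Then in χ(𝔤) one has [D(𝔤), L(𝔤)] = 0, i.e. every element of the ideal D(𝔤) generated by the brackets [x, y^ψ] commutes with every element of the ideal L(𝔤) generated by the elements x − x^ψ. -/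
/- Formalization of a statement from "Weak commutativity for Lie algebras"
   (arXiv:1808.10303). All Lie algebras are over a fixed field `K` with `char K ≠ 2`. -/

universe u v w

set_option linter.unusedVariables false

section WeakCommutativity

variable (K : Type u) [Field K] (g : Type v) [LieRing g] [LieAlgebra K g]

/-- The ideal `D(g) ⊆ χ(g)`, generated by the brackets `⁅x, yᵠ⁆` for `x, y ∈ g`. -/
noncomputable def chiD : LieIdeal K (chi K g) :=
  LieSubmodule.lieSpan K (chi K g) { z | ∃ x y : g, z = ⁅chiι K g x, chiψ K g y⁆ }

end WeakCommutativity

section ChiProofs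

namespace ChiAux

variable (K : Type u) [Field K] (g : Type v) [LieRing g] [LieAlgebra K g]

/-- The quotient map `FreeLieAlgebra K (g ⊕ g) → χ(g)` as a Lie algebra homomorphism. -/
noncomputable def Q : FreeLieAlgebra K (g ⊕ g) →ₗ⁅K⁆ chi K g :=
  { (chiIdeal K g : Submodule K (FreeLieAlgebra K (g ⊕ g))).mkQ with
    map_lie' := rfl }

lemma Q_ofl (x : g) : Q K g (ofl K g x) = chiι K g x := rfl

lemma Q_ofr (x : g) : Q K g (ofr K g x) = chiψ K g x := rfl

lemma Q_rel {z : FreeLieAlgebra K (g ⊕ g)} (h : z ∈ chiRelators K g) : Q K g z = 0 :=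
  (Submodule.Quotient.mk_eq_zero _).2 (LieSubmodule.subset_lieSpan h)

lemma ι_add (x y : g) : chiι K g (x + y) = chiι K g x + chiι K g y := by
  have h := Q_rel K g (Or.inl ⟨x, y, rfl⟩)
  rw [map_sub, map_sub, sub_sub, sub_eq_zero] at h
  exact h

lemma ψ_add (x y : g) : chiψ K g (x + y) = chiψ K g x + chiψ K g y := by
  have h := Q_rel K g (Or.inr (Or.inr (Or.inr (Or.inl ⟨x, y, rfl⟩))))
  rw [map_sub, map_sub, sub_sub, sub_eq_zero] at h
  exact h

lemma ι_smul (c : K) (x : g) : chiι K g (c • x) = c • chiι K g x := by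
  have h := Q_rel K g (Or.inr (Or.inl ⟨c, x, rfl⟩))
  rw [map_sub, map_smul, sub_eq_zero] at h
  exact h

lemma ψ_smul (c : K) (x : g) : chiψ K g (c • x) = c • chiψ K g x := by
  have h := Q_rel K g (Or.inr (Or.inr (Or.inr (Or.inr (Or.inl ⟨c, x, rfl⟩)))))
  rw [map_sub, map_smul, sub_eq_zero] at h
  exact h

lemma ι_lie (x y : g) : chiι K g ⁅x, y⁆ = ⁅chiι K g x, chiι K g y⁆ := by
  have h := Q_rel K g (Or.inr (Or.inr (Or.inl ⟨x, y, rfl⟩)))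
  rw [map_sub, LieHom.map_lie, sub_eq_zero] at h
  exact h

lemma ψ_lie (x y : g) : chiψ K g ⁅x, y⁆ = ⁅chiψ K g x, chiψ K g y⁆ := by
  have h := Q_rel K g (Or.inr (Or.inr (Or.inr (Or.inr (Or.inr (Or.inl ⟨x, y, rfl⟩))))))
  rw [map_sub, LieHom.map_lie, sub_eq_zero] at h
  exact h

lemma self0 (x : g) : ⁅chiι K g x, chiψ K g x⁆ = 0 := by
  have h := Q_rel K g (Or.inr (Or.inr (Or.inr (Or.inr (Or.inr (Or.inr ⟨x, rfl⟩))))))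
  rw [LieHom.map_lie] at h
  exact h

lemma ψ_neg (x : g) : chiψ K g (-x) = - chiψ K g x := by
  have := ψ_smul K g (-1 : K) x
  rwa [neg_one_smul, neg_one_smul] at this

/-- Abbreviation for the generators `⁅x, yᵠ⁆` of `D(g)`. -/
noncomputable def dd (a b : g) : chi K g := ⁅chiι K g a, chiψ K g b⁆

lemma dd_skew (a b : g) : dd K g a b = - dd K g b a := by
  have h := self0 K g (a + b)
  rw [ι_add, ψ_add, add_lie, lie_add, lie_add, self0, self0] at h
  have h' : dd K g a b + dd K g b a = 0 := by
    have : (0 + ⁅chiι K g a, chiψ K g b⁆) + (⁅chiι K g b, chiψ K g a⁆ + 0) =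
        dd K g a b + dd K g b a := by rw [zero_add, add_zero]; rfl
    rw [← this]; exact h
  exact eq_neg_of_add_eq_zero_left h'

lemma dd_swap (a b : g) : ⁅chiψ K g a, chiι K g b⁆ = dd K g a b := by
  calc ⁅chiψ K g a, chiι K g b⁆ = -⁅chiι K g b, chiψ K g a⁆ := (lie_skew _ _).symm
    _ = - dd K g b a := rfl
    _ = dd K g a b := (dd_skew K g a b).symm

lemma dd_neg_right (a w : g) : dd K g a (-w) = - dd K g a w := by
  show ⁅chiι K g a, chiψ K g (-w)⁆ = _
  rw [ψ_neg, lie_neg]; rfl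

lemma S_rec (a b c : g) :
    ⁅dd K g a b, chiι K g c⁆ = -⁅dd K g c a, chiι K g b⁆ - dd K g a ⁅c, b⁆ := by
  have h1 : dd K g a b = ⁅chiψ K g a, chiι K g b⁆ := (dd_swap K g a b).symm
  rw [h1, lie_lie, ← ι_lie, dd_swap, dd_swap]
  -- goal : dd a ⁅b,c⁆ - ⁅chiι b, dd a c⁆ = ...  (after rewriting inner brackets)
  have e1 : dd K g a ⁅b, c⁆ = - dd K g a ⁅c, b⁆ := by
    rw [show ⁅b, c⁆ = -⁅c, b⁆ from by rw [← lie_skew]]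
    exact dd_neg_right K g a ⁅c, b⁆
  have e2 : ⁅chiι K g b, dd K g a c⁆ = ⁅dd K g c a, chiι K g b⁆ := by
    rw [dd_skew K g a c, lie_neg, ← lie_skew, neg_neg]
  rw [e1, e2]; abel

lemma R_rec (a b c : g) :
    ⁅dd K g a b, chiψ K g c⁆ = -⁅dd K g c a, chiψ K g b⁆ - dd K g a ⁅c, b⁆ := by
  show ⁅⁅chiι K g a, chiψ K g b⁆, chiψ K g c⁆ = _
  rw [lie_lie, ← ψ_lie]
  have e0 : ⁅chiι K g a, chiψ K g ⁅b, c⁆⁆ = dd K g a ⁅b, c⁆ := rfl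
  have e0' : ⁅chiι K g a, chiψ K g c⁆ = dd K g a c := rfl
  rw [e0, e0']
  have e1 : dd K g a ⁅b, c⁆ = - dd K g a ⁅c, b⁆ := by
    rw [show ⁅b, c⁆ = -⁅c, b⁆ from by rw [← lie_skew]]
    exact dd_neg_right K g a ⁅c, b⁆
  have e2 : ⁅chiψ K g b, dd K g a c⁆ = ⁅dd K g c a, chiψ K g b⁆ := by
    rw [dd_skew K g a c, lie_neg, ← lie_skew, neg_neg]
  rw [e1, e2]; abel

lemma two_S (a b c : g) :
    ⁅dd K g a b, chiι K g c⁆ + ⁅dd K g a b, chiι K g c⁆ =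
      dd K g c ⁅b, a⁆ - dd K g b ⁅a, c⁆ - dd K g a ⁅c, b⁆ := by
  have h1 := S_rec K g a b c
  have h2 := S_rec K g c a b
  have h3 := S_rec K g b c a
  rw [h3] at h2
  rw [h2] at h1
  nth_rewrite 2 [h1]
  abel

lemma two_R (a b c : g) :
    ⁅dd K g a b, chiψ K g c⁆ + ⁅dd K g a b, chiψ K g c⁆ =
      dd K g c ⁅b, a⁆ - dd K g b ⁅a, c⁆ - dd K g a ⁅c, b⁆ := by
  have h1 := R_rec K g a b c
  have h2 := R_rec K g c a b
  have h3 := R_rec K g b c a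
  rw [h3] at h2
  rw [h2] at h1
  nth_rewrite 2 [h1]
  abel

variable {K}

lemma dd_lie_gen (hchar : ringChar K ≠ 2) (a b c : g) :
    ⁅dd K g a b, chiι K g c - chiψ K g c⁆ = 0 := by
  have h2 : (2 : K) ≠ 0 := Ring.two_ne_zero hchar
  have key : ⁅dd K g a b, chiι K g c⁆ = ⁅dd K g a b, chiψ K g c⁆ := by
    have h : (2 : K) • (⁅dd K g a b, chiι K g c⁆ - ⁅dd K g a b, chiψ K g c⁆) = 0 := by
      rw [two_smul]
      have : (⁅dd K g a b, chiι K g c⁆ + ⁅dd K g a b, chiι K g c⁆) -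
          (⁅dd K g a b, chiψ K g c⁆ + ⁅dd K g a b, chiψ K g c⁆) = 0 := by
        rw [two_S, two_R]; abel
      rw [← this]; abel
    rcases smul_eq_zero.mp h with h | h
    · exact absurd h h2
    · exact sub_eq_zero.mp h
  rw [lie_sub, key, sub_self]

variable (K)

/-- The `K`-span of the generators `⁅x, yᵠ⁆` of `D(g)`. -/
noncomputable def V : Submodule K (chi K g) :=
  Submodule.span K { z | ∃ x y : g, z = ⁅chiι K g x, chiψ K g y⁆ }

lemma dd_mem_V (a b : g) : dd K g a b ∈ V K g :=
  Submodule.subset_span ⟨a, b, rfl⟩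

variable {K g}

lemma half_mem (hchar : ringChar K ≠ 2) {x : chi K g} (hx : x + x ∈ V K g) : x ∈ V K g := by
  have h2 : (2 : K) ≠ 0 := Ring.two_ne_zero hchar
  have h : (2 : K) • x ∈ V K g := by rw [two_smul]; exact hx
  have := (V K g).smul_mem (2 : K)⁻¹ h
  rwa [inv_smul_smul₀ h2] at this

lemma lie_ι_dd_mem (hchar : ringChar K ≠ 2) (x a b : g) :
    ⁅chiι K g x, dd K g a b⁆ ∈ V K g := by
  have hm : ⁅dd K g a b, chiι K g x⁆ ∈ V K g := by
    apply half_mem hchar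
    rw [two_S]
    exact sub_mem (sub_mem (dd_mem_V K g _ _) (dd_mem_V K g _ _)) (dd_mem_V K g _ _)
  rw [← lie_skew]
  exact neg_mem hm

lemma lie_ψ_dd_mem (hchar : ringChar K ≠ 2) (x a b : g) :
    ⁅chiψ K g x, dd K g a b⁆ ∈ V K g := by
  have hm : ⁅dd K g a b, chiψ K g x⁆ ∈ V K g := by
    apply half_mem hchar
    rw [two_R]
    exact sub_mem (sub_mem (dd_mem_V K g _ _) (dd_mem_V K g _ _)) (dd_mem_V K g _ _)
  rw [← lie_skew]
  exact neg_mem hm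

lemma lie_ι_V_mem (hchar : ringChar K ≠ 2) (x : g) {m : chi K g} (hm : m ∈ V K g) :
    ⁅chiι K g x, m⁆ ∈ V K g := by
  induction hm using Submodule.span_induction with
  | mem z hz => obtain ⟨a, b, rfl⟩ := hz; exact lie_ι_dd_mem hchar x a b
  | zero => rw [lie_zero]; exact zero_mem _
  | add y z hy hz hy' hz' => rw [lie_add]; exact add_mem hy' hz'
  | smul c y hy hy' => rw [lie_smul]; exact Submodule.smul_mem _ _ hy'

lemma lie_ψ_V_mem (hchar : ringChar K ≠ 2) (x : g) {m : chi K g} (hm : m ∈ V K g) :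
    ⁅chiψ K g x, m⁆ ∈ V K g := by
  induction hm using Submodule.span_induction with
  | mem z hz => obtain ⟨a, b, rfl⟩ := hz; exact lie_ψ_dd_mem hchar x a b
  | zero => rw [lie_zero]; exact zero_mem _
  | add y z hy hz hy' hz' => rw [lie_add]; exact add_mem hy' hz'
  | smul c y hy hy' => rw [lie_smul]; exact Submodule.smul_mem _ _ hy'

variable (K g)

/-- The "idealizer-like" subalgebra of elements whose adjoint action preserves `V`. -/
noncomputable def A : LieSubalgebra K (chi K g) where
  carrier := { u | ∀ m ∈ V K g, ⁅u, m⁆ ∈ V K g }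
  add_mem' := fun hu hv m hm => by rw [add_lie]; exact add_mem (hu m hm) (hv m hm)
  zero_mem' := fun m hm => by rw [zero_lie]; exact zero_mem _
  smul_mem' := fun c u hu m hm => by rw [smul_lie]; exact Submodule.smul_mem _ _ (hu m hm)
  lie_mem' := fun {u v} hu hv m hm => by
    rw [lie_lie]; exact sub_mem (hu _ (hv m hm)) (hv _ (hu m hm))

variable {K g}

lemma mem_A_all (hchar : ringChar K ≠ 2) (u : chi K g) : u ∈ A K g := by
  let f : g ⊕ g → A K g := fun s =>
    ⟨Q K g (FreeLieAlgebra.of K s), by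
      cases s with
      | inl x => exact fun m hm => lie_ι_V_mem hchar x hm
      | inr x => exact fun m hm => lie_ψ_V_mem hchar x hm⟩
  let F : FreeLieAlgebra K (g ⊕ g) →ₗ⁅K⁆ A K g := FreeLieAlgebra.lift K f
  have hcomp : (A K g).incl.comp F = Q K g := by
    apply FreeLieAlgebra.hom_ext
    intro s
    show ((F (FreeLieAlgebra.of K s) : A K g) : chi K g) = Q K g (FreeLieAlgebra.of K s)
    rw [show F (FreeLieAlgebra.of K s) = f s from FreeLieAlgebra.lift_of_apply f s]
  obtain ⟨z, rfl⟩ := LieSubmodule.Quotient.surjective_mk' (chiIdeal K g) u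
  have : LieSubmodule.Quotient.mk' (chiIdeal K g) z = ((F z : A K g) : chi K g) := by
    rw [show (LieSubmodule.Quotient.mk' (chiIdeal K g) z : chi K g) = Q K g z from rfl,
      ← hcomp]
    rfl
  rw [this]
  exact (F z).2

lemma chiD_le_V (hchar : ringChar K ≠ 2) {m : chi K g} (hm : m ∈ chiD K g) : m ∈ V K g := by
  let W : LieIdeal K (chi K g) :=
    { V K g with
      lie_mem := fun {x m} hm => mem_A_all hchar x m hm }
  have hle : chiD K g ≤ W := LieSubmodule.lieSpan_le.2 (fun z hz => Submodule.subset_span hz)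
  exact hle hm

variable (K g)

/-- The centralizer of `D(g)`, a Lie ideal. -/
noncomputable def C : LieIdeal K (chi K g) where
  carrier := { u | ∀ m ∈ chiD K g, ⁅u, m⁆ = 0 }
  add_mem' := fun {u v} hu hv m hm => by rw [add_lie, hu m hm, hv m hm, add_zero]
  zero_mem' := fun m hm => by rw [zero_lie]
  smul_mem' := fun c u hu m hm => by rw [smul_lie, hu m hm, smul_zero]
  lie_mem := fun {x u} hu m hm => by
    rw [lie_lie, hu m hm, lie_zero, hu ⁅x, m⁆ ((chiD K g).lie_mem hm), zero_sub, neg_zero]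

variable {K g}

lemma gen_lie_V (hchar : ringChar K ≠ 2) (c : g) {m : chi K g} (hm : m ∈ V K g) :
    ⁅chiι K g c - chiψ K g c, m⁆ = 0 := by
  induction hm using Submodule.span_induction with
  | mem z hz =>
    obtain ⟨a, b, rfl⟩ := hz
    have h := dd_lie_gen (g := g) hchar a b c
    rw [← lie_skew, show ⁅chiι K g a, chiψ K g b⁆ = dd K g a b from rfl, h, neg_zero]
  | zero => rw [lie_zero]
  | add y z hy hz hy' hz' => rw [lie_add, hy', hz', add_zero]
  | smul c' y hy hy' => rw [lie_smul, hy', smul_zero]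

lemma gen_mem_C (hchar : ringChar K ≠ 2) (c : g) :
    chiι K g c - chiψ K g c ∈ C K g :=
  fun m hm => gen_lie_V hchar c (chiD_le_V hchar hm)

lemma chiL_le_C (hchar : ringChar K ≠ 2) : chiL K g ≤ C K g := by
  apply LieSubmodule.lieSpan_le.2
  rintro z ⟨x, rfl⟩
  exact gen_mem_C hchar x

end ChiAux

end ChiProofs


/-- In `χ(g)` one has `⁅D(g), L(g)⁆ = 0`: every element of the ideal `D(g)`
generated by the brackets `⁅x, yᵠ⁆` commutes with every element of the ideal `L(g)`
generated by the elements `x - xᵠ`. -/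
theorem chi_bracket_D_L_eq_zero
    (K : Type u) [Field K] (hchar : ringChar K ≠ 2)
    (g : Type v) [LieRing g] [LieAlgebra K g] :
    ∀ d ∈ chiD K g, ∀ l ∈ chiL K g, ⁅d, l⁆ = 0 := by
  intro d hd l hl
  have hlC : l ∈ ChiAux.C K g := ChiAux.chiL_le_C hchar hl
  have h : ⁅l, d⁆ = 0 := hlC d hd
  rw [← lie_skew d l, h, neg_zero]
end

section
/- Let K be a field with char K ≠ 2 and let 𝔤 be a Lie algebra over K. Let ρ: χ(𝔤) → 𝔤 ⊕ 𝔤 ⊕ 𝔤 be the homomorphism with ρ(x) = (x, x, 0) and ρ(x^ψ) = (0, x, x) for x ∈ 𝔤. Then the image of ρ equals {(x, y, z) ∈ 𝔤 ⊕ 𝔤 ⊕ 𝔤 : x − y + z ∈ [𝔤, 𝔤]}; in particular Im(ρ) is a subdirect sum of 𝔤 ⊕ 𝔤 ⊕ 𝔤 and, for each pair (i, j) with 1 ≤ i < j ≤ 3, the projection of Im(ρ) onto the i-th and j-th coordinates is all of 𝔤 ⊕ 𝔤. -/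
/- Formalization of a statement from "Weak commutativity for Lie algebras"
   (arXiv:1808.10303). All Lie algebras are over a fixed field `K` with `char K ≠ 2`. -/

universe u v w

set_option linter.unusedVariables false

section ProdLie

variable (L : Type*) (M : Type*) [LieRing L] [LieRing M]

/-- The direct sum of two Lie rings, with componentwise bracket. -/
instance prodLieRing : LieRing (L × M) where
  bracket p q := (⁅p.1, q.1⁆, ⁅p.2, q.2⁆)
  add_lie p q r := by refine Prod.ext ?_ ?_ <;> dsimp <;> exact add_lie _ _ _
  lie_add p q r := by refine Prod.ext ?_ ?_ <;> dsimp <;> exact lie_add _ _ _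
  lie_self p := by refine Prod.ext ?_ ?_ <;> dsimp <;> simp
  leibniz_lie p q r := by refine Prod.ext ?_ ?_ <;> dsimp <;> exact leibniz_lie _ _ _

/-- The direct sum of two Lie algebras. -/
instance prodLieAlgebra (K : Type*) [CommRing K] [LieAlgebra K L] [LieAlgebra K M] :
    LieAlgebra K (L × M) where
  lie_smul t p q := by refine Prod.ext ?_ ?_ <;> exact lie_smul _ _ _

end ProdLie

section AuxDerived
variable (K : Type u) [Field K] (g : Type v) [LieRing g] [LieAlgebra K g]

lemma derived_eq' : LieAlgebra.derivedSeries K g 1 = ⁅(⊤ : LieIdeal K g), (⊤ : LieIdeal K g)⁆ := by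
  simp [LieAlgebra.derivedSeries, LieAlgebra.derivedSeriesOfIdeal_succ,
    LieAlgebra.derivedSeriesOfIdeal_zero]

lemma bracket_mem_derived' (x y : g) : ⁅x, y⁆ ∈ LieAlgebra.derivedSeries K g 1 := by
  rw [derived_eq']
  exact LieSubmodule.lie_mem_lie (LieSubmodule.mem_top _) (LieSubmodule.mem_top _)

/-- The quotient map `Free → χ(g)` as a Lie algebra homomorphism. -/
noncomputable def chiMk : FreeLieAlgebra K (g ⊕ g) →ₗ⁅K⁆ chi K g :=
  { (LieSubmodule.Quotient.mk' (chiIdeal K g)).toLinearMap with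
    map_lie' := fun {x y} => (LieSubmodule.Quotient.mk_bracket (I := chiIdeal K g) x y).symm }

/-- The Lie algebra hom `g × g × g → g ⧸ [g,g]`, `(x,y,z) ↦ x - y + z mod [g,g]`. -/
noncomputable def phiHom : (g × g × g) →ₗ⁅K⁆ g ⧸ LieAlgebra.derivedSeries K g 1 where
  toFun p := LieSubmodule.Quotient.mk' (LieAlgebra.derivedSeries K g 1)
    (p.1 - p.2.1 + p.2.2)
  map_add' p q := by
    have h : (p + q).1 - (p + q).2.1 + (p + q).2.2
        = (p.1 - p.2.1 + p.2.2) + (q.1 - q.2.1 + q.2.2) := by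
      show p.1 + q.1 - (p.2.1 + q.2.1) + (p.2.2 + q.2.2) = _
      abel
    rw [h]
    exact map_add _ _ _
  map_smul' c p := by
    have h : (c • p).1 - (c • p).2.1 + (c • p).2.2 = c • (p.1 - p.2.1 + p.2.2) := by
      show c • p.1 - c • p.2.1 + c • p.2.2 = _
      rw [smul_add, smul_sub]
    rw [h, RingHom.id_apply]
    exact map_smul _ _ _
  map_lie' {p q} := by
    have h : (⁅p, q⁆ : g × g × g).1 - (⁅p, q⁆ : g × g × g).2.1 + (⁅p, q⁆ : g × g × g).2.2
        = ⁅p.1, q.1⁆ - ⁅p.2.1, q.2.1⁆ + ⁅p.2.2, q.2.2⁆ := rfl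
    have hz : ⁅p.1, q.1⁆ - ⁅p.2.1, q.2.1⁆ + ⁅p.2.2, q.2.2⁆ ∈
        LieAlgebra.derivedSeries K g 1 :=
      add_mem (sub_mem (bracket_mem_derived' K g _ _) (bracket_mem_derived' K g _ _))
        (bracket_mem_derived' K g _ _)
    have l1 : (LieSubmodule.Quotient.mk (N := LieAlgebra.derivedSeries K g 1)
        (⁅p.1, q.1⁆ - ⁅p.2.1, q.2.1⁆ + ⁅p.2.2, q.2.2⁆) : g ⧸ LieAlgebra.derivedSeries K g 1)
        = 0 := LieSubmodule.Quotient.mk_eq_zero'.mpr hz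
    have l2 : (LieSubmodule.Quotient.mk (N := LieAlgebra.derivedSeries K g 1)
        ⁅p.1 - p.2.1 + p.2.2, q.1 - q.2.1 + q.2.2⁆ : g ⧸ LieAlgebra.derivedSeries K g 1)
        = 0 := LieSubmodule.Quotient.mk_eq_zero'.mpr (bracket_mem_derived' K g _ _)
    simp only [h, LieSubmodule.Quotient.mk'_apply, ← LieSubmodule.Quotient.mk_bracket]
    rw [l1, l2]

end AuxDerived

/-- The image of `ρ : χ(g) → g ⊕ g ⊕ g` equals
`{(x, y, z) : x - y + z ∈ [g, g]}`; in particular it is a subdirect sum of `g ⊕ g ⊕ g`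
projecting onto any two of the three coordinates. -/
theorem chi_image_rho_subdirect
    (K : Type u) [Field K] (hchar : ringChar K ≠ 2)
    (g : Type v) [LieRing g] [LieAlgebra K g]
    (ρ : chi K g →ₗ⁅K⁆ g × g × g)
    (hρι : ∀ x : g, ρ (chiι K g x) = (x, x, 0))
    (hρψ : ∀ x : g, ρ (chiψ K g x) = (0, x, x)) :
    (ρ.range : Set (g × g × g)) =
        {p : g × g × g | p.1 - p.2.1 + p.2.2 ∈ LieAlgebra.derivedSeries K g 1} ∧
      (∀ a b : g, ∃ z : chi K g, (ρ z).1 = a ∧ (ρ z).2.1 = b) ∧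
      (∀ a b : g, ∃ z : chi K g, (ρ z).1 = a ∧ (ρ z).2.2 = b) ∧
      (∀ a b : g, ∃ z : chi K g, (ρ z).2.1 = a ∧ (ρ z).2.2 = b) := by
  have htwo : (2 : K) ≠ 0 := Ring.two_ne_zero hchar
  -- the key lemma: (0, d, 0) is in the range for every d in the derived subalgebra
  have key : ∀ d ∈ LieAlgebra.derivedSeries K g 1, ((0 : g), d, (0 : g)) ∈ ρ.range := by
    intro d hd
    rw [derived_eq' K g] at hd
    rw [← LieSubmodule.mem_toSubmodule, LieSubmodule.lieIdeal_oper_eq_linear_span'] at hd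
    refine Submodule.span_induction (p := fun d _ => ((0 : g), d, (0 : g)) ∈ ρ.range)
      ?_ ?_ ?_ ?_ hd
    · rintro m ⟨x, -, y, -, rfl⟩
      show ((0 : g), ⁅x, y⁆, (0 : g)) ∈ ρ.range
      set z0 : chi K g := chiι K g ⁅x, y⁆ + chiψ K g ⁅x, y⁆ -
        ⁅chiι K g x - chiψ K g x, chiι K g y - chiψ K g y⁆ with hz0def
      have hz0 : ρ z0 = ((0 : g), ⁅x, y⁆ + ⁅x, y⁆, (0 : g)) := by
        rw [hz0def, map_sub, map_add, LieHom.map_lie, map_sub, map_sub,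
          hρι, hρψ, hρι, hρψ, hρι, hρψ]
        refine Prod.ext ?_ (Prod.ext ?_ ?_)
        · show ⁅x, y⁆ + 0 - ⁅x - 0, y - 0⁆ = 0
          simp
        · show ⁅x, y⁆ + ⁅x, y⁆ - ⁅x - x, y - y⁆ = ⁅x, y⁆ + ⁅x, y⁆
          simp
        · show 0 + ⁅x, y⁆ - ⁅0 - x, 0 - y⁆ = 0
          simp
      refine (ρ.mem_range _).mpr ⟨(2 : K)⁻¹ • z0, ?_⟩
      rw [map_smul, hz0]
      refine Prod.ext ?_ (Prod.ext ?_ ?_)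
      · show (2 : K)⁻¹ • (0 : g) = 0; simp
      · show (2 : K)⁻¹ • (⁅x, y⁆ + ⁅x, y⁆) = ⁅x, y⁆
        rw [← two_smul K (⁅x, y⁆ : g), smul_smul, inv_mul_cancel₀ htwo, one_smul]
      · show (2 : K)⁻¹ • (0 : g) = 0; simp
    · show ((0 : g), (0 : g), (0 : g)) ∈ ρ.range
      exact zero_mem ρ.range
    · intro a b _ _ ha hb
      show ((0 : g), a + b, (0 : g)) ∈ ρ.range
      have : ((0 : g), a + b, (0 : g)) = ((0 : g), a, (0 : g)) + ((0 : g), b, (0 : g)) := by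
        refine Prod.ext ?_ (Prod.ext ?_ ?_) <;> simp
      rw [this]; exact add_mem ha hb
    · intro c a _ ha
      show ((0 : g), c • a, (0 : g)) ∈ ρ.range
      have : ((0 : g), c • a, (0 : g)) = c • ((0 : g), a, (0 : g)) := by
        refine Prod.ext ?_ (Prod.ext ?_ ?_) <;> simp
      rw [this]; exact LieSubalgebra.smul_mem _ c ha
  refine ⟨?_, ?_, ?_, ?_⟩
  · -- the image description
    ext p
    simp only [SetLike.mem_coe, Set.mem_setOf_eq, LieHom.mem_range]
    constructor
    · rintro ⟨z, rfl⟩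
      obtain ⟨w, hw⟩ := LieSubmodule.Quotient.surjective_mk' (chiIdeal K g) z
      set F : FreeLieAlgebra K (g ⊕ g) →ₗ⁅K⁆ g ⧸ LieAlgebra.derivedSeries K g 1 :=
        (phiHom K g).comp (ρ.comp (chiMk K g)) with hFdef
      have hF : F = (phiHom K g).comp (ρ.comp (chiMk K g)) := rfl
      have hF0 : ∀ u, F u = 0 := by
        have h0 : F = ((0 : g →ₗ⁅K⁆ g ⧸ LieAlgebra.derivedSeries K g 1).comp
            (0 : FreeLieAlgebra K (g ⊕ g) →ₗ⁅K⁆ g)) := by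
          apply FreeLieAlgebra.hom_ext
          rintro (x | x)
          · show phiHom K g (ρ (chiMk K g (ofl K g x))) = _
            have : chiMk K g (ofl K g x) = chiι K g x := rfl
            rw [this, hρι]
            show LieSubmodule.Quotient.mk' (LieAlgebra.derivedSeries K g 1)
              (x - x + 0) = _
            simp
          · show phiHom K g (ρ (chiMk K g (ofr K g x))) = _
            have : chiMk K g (ofr K g x) = chiψ K g x := rfl
            rw [this, hρψ]
            show LieSubmodule.Quotient.mk' (LieAlgebra.derivedSeries K g 1)
              (0 - x + x) = _
            simp
        intro u
        rw [h0]
        simp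
      have := hF0 w
      rw [hFdef] at this
      have h2 : phiHom K g (ρ z) = 0 := by
        rw [← hw]
        exact this
      have h3 : LieSubmodule.Quotient.mk' (LieAlgebra.derivedSeries K g 1)
          ((ρ z).1 - (ρ z).2.1 + (ρ z).2.2) = 0 := h2
      exact (LieSubmodule.Quotient.mk_eq_zero _).mp h3
    · intro hp
      have hd : p.2.1 - p.1 - p.2.2 ∈ LieAlgebra.derivedSeries K g 1 := by
        have h := neg_mem hp
        have : -(p.1 - p.2.1 + p.2.2) = p.2.1 - p.1 - p.2.2 := by abel
        rwa [this] at h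
      obtain ⟨zd, hzd⟩ := (ρ.mem_range _).mp (key _ hd)
      refine ⟨chiι K g p.1 + chiψ K g p.2.2 + zd, ?_⟩
      rw [map_add, map_add, hρι, hρψ, hzd]
      refine Prod.ext ?_ (Prod.ext ?_ ?_)
      · show p.1 + 0 + 0 = p.1; simp
      · show p.1 + p.2.2 + (p.2.1 - p.1 - p.2.2) = p.2.1; abel
      · show 0 + p.2.2 + 0 = p.2.2; simp
  · intro a b
    refine ⟨chiι K g a + chiψ K g (b - a), ?_, ?_⟩
    · rw [map_add, hρι, hρψ]; show a + 0 = a; simp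
    · rw [map_add, hρι, hρψ]; show a + (b - a) = b; abel
  · intro a b
    refine ⟨chiι K g a + chiψ K g b, ?_, ?_⟩
    · rw [map_add, hρι, hρψ]; show a + 0 = a; simp
    · rw [map_add, hρι, hρψ]; show 0 + b = b; simp
  · intro a b
    refine ⟨chiι K g (a - b) + chiψ K g b, ?_, ?_⟩
    · rw [map_add, hρι, hρψ]; show a - b + b = a; abel
    · rw [map_add, hρι, hρψ]; show 0 + b = b; simp
end

section
/- Let K be a field with char K ≠ 2, let 𝔣 be a non-abelian free Lie algebra of finite rank over K, and let S be the Lie subalgebra of 𝔣 ⊕ 𝔣 generated by the elements (x, −x) for x ∈ 𝔣. Then the second Lie algebra homology H₂(S; K) with trivial coefficients is infinite dimensional. -/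
/- Formalization of a statement from "Weak commutativity for Lie algebras"
   (arXiv:1808.10303). All Lie algebras are over a fixed field `K` with `char K ≠ 2`. -/

universe u v w

set_option linter.unusedVariables false

/-- The Hopf-formula model of the second homology `H₂(𝔣/𝔯; K)` of a Lie algebra presented
as the quotient of a free Lie algebra `𝔣` by an ideal `𝔯`: the subspace
`([𝔣, 𝔣] ⊓ 𝔯)/⁅𝔣, 𝔯⁆` of `𝔣/⁅𝔣, 𝔯⁆`. -/
noncomputable def hopfH2 (K : Type u) [Field K] {X : Type w}
    (r : LieIdeal K (FreeLieAlgebra K X)) :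
    Submodule K (FreeLieAlgebra K X ⧸
      LieSubmodule.toSubmodule (⁅(⊤ : LieIdeal K (FreeLieAlgebra K X)), r⁆ :
        LieIdeal K (FreeLieAlgebra K X))) :=
  Submodule.map
    (LieSubmodule.toSubmodule (⁅(⊤ : LieIdeal K (FreeLieAlgebra K X)), r⁆ :
      LieIdeal K (FreeLieAlgebra K X))).mkQ
    (LieSubmodule.toSubmodule
      ((⁅(⊤ : LieIdeal K (FreeLieAlgebra K X)), (⊤ : LieIdeal K (FreeLieAlgebra K X))⁆ ⊓ r :
        LieIdeal K (FreeLieAlgebra K X))))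

namespace WkComm

variable {K : Type u} [Field K]

def Tw (K : Type u) [Field K] : Type u := ℕ → K

instance : AddCommGroup (Tw K) := inferInstanceAs (AddCommGroup (ℕ → K))
instance : Module K (Tw K) := inferInstanceAs (Module K (ℕ → K))

namespace Tw

@[simp] lemma add_apply (u v : Tw K) (k : ℕ) : (u + v) k = u k + v k := rfl
@[simp] lemma smul_apply (t : K) (u : Tw K) (k : ℕ) : (t • u) k = t * u k := rfl
@[simp] lemma zero_apply (k : ℕ) : (0 : Tw K) k = 0 := rfl
@[simp] lemma neg_apply (u : Tw K) (k : ℕ) : (-u) k = -(u k) := rfl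

def br (u v : Tw K) : Tw K := fun k =>
  match k with
  | 0 => 0
  | 1 => 0
  | (j+2) => u 0 * v (j+1) - v 0 * u (j+1)

@[simp] lemma br_zero (u v : Tw K) : br u v 0 = 0 := rfl
@[simp] lemma br_one (u v : Tw K) : br u v 1 = 0 := rfl
lemma br_two (u v : Tw K) (j : ℕ) : br u v (j+2) = u 0 * v (j+1) - v 0 * u (j+1) := rfl


instance : LieRing (Tw K) where
  bracket := br
  add_lie u v w := by
    funext k
    rcases k with _ | _ | j
    · show (0:K) = 0 + 0; ring
    · show (0:K) = 0 + 0; ring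
    · show br (u+v) w (j+2) = br u w (j+2) + br v w (j+2)
      simp only [br_two, add_apply]; ring
  lie_add u v w := by
    funext k
    rcases k with _ | _ | j
    · show (0:K) = 0 + 0; ring
    · show (0:K) = 0 + 0; ring
    · show br u (v+w) (j+2) = br u v (j+2) + br u w (j+2)
      simp only [br_two, add_apply]; ring
  lie_self u := by
    funext k
    rcases k with _ | _ | j
    · rfl
    · rfl
    · show br u u (j+2) = (0 : Tw K) (j+2)
      simp only [br_two, zero_apply]; ring
  leibniz_lie u v w := by
    funext k
    rcases k with _ | _ | j
    · show (0:K) = 0 + 0; ring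
    · show (0:K) = 0 + 0; ring
    · show br u (br v w) (j+2) = br (br u v) w (j+2) + br v (br u w) (j+2)
      rcases j with _ | i
      · show u 0 * br v w 1 - br v w 0 * u 1 =
          (br u v 0 * w 1 - w 0 * br u v 1) + (v 0 * br u w 1 - br u w 0 * v 1)
        simp only [br_zero, br_one]; ring
      · simp only [br_two, br_zero]; ring

instance : LieAlgebra K (Tw K) where
  lie_smul t u v := by
    funext k
    rcases k with _ | _ | j
    · show (0:K) = t * 0; ring
    · show (0:K) = t * 0; ring
    · show br u (t • v) (j+2) = (t • br u v) (j+2)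
      simp only [br_two, smul_apply]; ring

@[simp] lemma lie_apply_zero (u v : Tw K) : (⁅u, v⁆ : Tw K) 0 = 0 := rfl
@[simp] lemma lie_apply_one (u v : Tw K) : (⁅u, v⁆ : Tw K) 1 = 0 := rfl
lemma lie_apply_two (u v : Tw K) (j : ℕ) :
    (⁅u, v⁆ : Tw K) (j+2) = u 0 * v (j+1) - v 0 * u (j+1) := rfl

def sng (j : ℕ) : Tw K := fun k => if k = j then (1:K) else 0

@[simp] lemma sng_apply_self (j : ℕ) : (sng j : Tw K) j = 1 := if_pos rfl
lemma sng_apply_ne {k j : ℕ} (h : k ≠ j) : (sng j : Tw K) k = 0 := if_neg h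

lemma lie_sng_sng {j : ℕ} (hj : 1 ≤ j) :
    (⁅(sng 0 : Tw K), sng j⁆ : Tw K) = sng (j+1) := by
  funext k
  rcases k with _ | _ | m
  · rw [lie_apply_zero, sng_apply_ne]; omega
  · rw [lie_apply_one, sng_apply_ne]; omega
  · rw [lie_apply_two]
    have h0 : (sng j : Tw K) 0 = 0 := sng_apply_ne (by omega)
    rw [sng_apply_self, h0, one_mul, zero_mul, sub_zero]
    by_cases h : m + 1 = j
    · subst h; rw [sng_apply_self, sng_apply_self]
    · rw [sng_apply_ne h, sng_apply_ne (by omega)]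

/-- The pairing functional `C_d(u,v) = ∑_{i=1}^{d} u_i v_{d+1-i}`, written with `d = e+1`
as a sum over `Finset.range d`. -/
def Cf (d : ℕ) (u v : Tw K) : K := ∑ i ∈ Finset.range d, u (i+1) * v (d - i)

lemma Cf_add_left (d : ℕ) (u u' v : Tw K) :
    Cf d (u + u') v = Cf d u v + Cf d u' v := by
  simp only [Cf, add_apply, add_mul, Finset.sum_add_distrib]

lemma Cf_add_right (d : ℕ) (u v v' : Tw K) :
    Cf d u (v + v') = Cf d u v + Cf d u v' := by
  simp only [Cf, add_apply, mul_add, Finset.sum_add_distrib]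

lemma Cf_smul_left (d : ℕ) (t : K) (u v : Tw K) :
    Cf d (t • u) v = t * Cf d u v := by
  simp only [Cf, smul_apply, Finset.mul_sum]; exact Finset.sum_congr rfl fun i _ => by ring

lemma Cf_smul_right (d : ℕ) (t : K) (u v : Tw K) :
    Cf d u (t • v) = t * Cf d u v := by
  simp only [Cf, smul_apply, Finset.mul_sum]; exact Finset.sum_congr rfl fun i _ => by ring

@[simp] lemma Cf_zero_left (d : ℕ) (v : Tw K) : Cf d 0 v = 0 := by
  simp [Cf]

@[simp] lemma Cf_zero_right (d : ℕ) (u : Tw K) : Cf d u 0 = 0 := by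
  simp [Cf]

lemma Cf_neg_left (d : ℕ) (u v : Tw K) : Cf d (-u) v = - Cf d u v := by
  simp only [Cf, neg_apply, neg_mul, Finset.sum_neg_distrib]

lemma Cf_neg_right (d : ℕ) (u v : Tw K) : Cf d u (-v) = - Cf d u v := by
  simp only [Cf, neg_apply, mul_neg, Finset.sum_neg_distrib]

lemma Cf_lie_left (e : ℕ) (a b v : Tw K) :
    Cf (e+1) ⁅a, b⁆ v
      = ∑ i ∈ Finset.range e, (a 0 * b (i+1) - b 0 * a (i+1)) * v (e - i) := by
  rw [Cf, Finset.sum_range_succ']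
  have h0 : (⁅a, b⁆ : Tw K) (0+1) * v (e+1-0) = 0 := by
    rw [show (0:ℕ)+1 = 1 from rfl, lie_apply_one, zero_mul]
  rw [h0, add_zero]
  refine Finset.sum_congr rfl fun i hi => ?_
  have hmem := Finset.mem_range.mp hi
  have h1 : (⁅a, b⁆ : Tw K) (i+1+1) = a 0 * b (i+1) - b 0 * a (i+1) := lie_apply_two a b i
  have h4 : e + 1 - (i + 1) = e - i := by omega
  rw [h1, h4]

lemma Cf_lie_right (e : ℕ) (v a b : Tw K) :
    Cf (e+1) v ⁅a, b⁆
      = ∑ i ∈ Finset.range e, v (i+1) * (a 0 * b (e - i) - b 0 * a (e - i)) := by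
  rw [Cf, Finset.sum_range_succ]
  have h0 : v (e+1) * (⁅a, b⁆ : Tw K) (e+1-e) = 0 := by
    rw [show e+1-e = 1 by omega, lie_apply_one, mul_zero]
  rw [h0, add_zero]
  refine Finset.sum_congr rfl fun i hi => ?_
  have hmem := Finset.mem_range.mp hi
  have h2 : e + 1 - i = (e - i - 1) + 2 := by omega
  rw [h2, lie_apply_two]
  have h3 : e - i - 1 + 1 = e - i := by omega
  rw [h3]

/-- The key cocycle identity. -/
lemma cocyc (e : ℕ) (A1 A2 A3 B1 B2 B3 : Tw K)
    (h1 : B1 0 = -A1 0) (h2 : B2 0 = -A2 0) (h3 : B3 0 = -A3 0) :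
    (Cf (e+1) ⁅A1, A2⁆ B3 - Cf (e+1) A3 ⁅B1, B2⁆)
      + (Cf (e+1) ⁅A2, A3⁆ B1 - Cf (e+1) A1 ⁅B2, B3⁆)
      + (Cf (e+1) ⁅A3, A1⁆ B2 - Cf (e+1) A2 ⁅B3, B1⁆) = 0 := by
  rw [Cf_lie_left, Cf_lie_left, Cf_lie_left, Cf_lie_right, Cf_lie_right, Cf_lie_right]
  rw [← Finset.sum_sub_distrib, ← Finset.sum_sub_distrib, ← Finset.sum_sub_distrib,
    ← Finset.sum_add_distrib, ← Finset.sum_add_distrib]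
  refine Finset.sum_eq_zero fun i _ => ?_
  rw [h1, h2, h3]
  ring

end Tw

section Free

variable (K : Type u) [Field K] (n : ℕ)

/-- images of the free generators in the tower algebra -/
def gen : Fin n → Tw K := fun i =>
  if (i : ℕ) = 0 then Tw.sng 0 else if (i : ℕ) = 1 then Tw.sng 1 else 0

/-- the main evaluation homomorphism -/
noncomputable def rh : FreeLieAlgebra K (Fin n) →ₗ⁅K⁆ Tw K :=
  FreeLieAlgebra.lift K (gen K n)

variable {n}

noncomputable def xx (hn : 2 ≤ n) : FreeLieAlgebra K (Fin n) := FreeLieAlgebra.of K ⟨0, by omega⟩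
noncomputable def yy (hn : 2 ≤ n) : FreeLieAlgebra K (Fin n) := FreeLieAlgebra.of K ⟨1, by omega⟩

lemma rh_xx (hn : 2 ≤ n) : rh K n (xx K hn) = Tw.sng 0 := by
  rw [xx, rh, FreeLieAlgebra.lift_of_apply, gen]; rfl

lemma rh_yy (hn : 2 ≤ n) : rh K n (yy K hn) = Tw.sng 1 := by
  rw [yy, rh, FreeLieAlgebra.lift_of_apply, gen]; rfl

/-- the iterated brackets `γ_m = ad(x)^m ⁅x,y⁆` -/
noncomputable def gam (hn : 2 ≤ n) : ℕ → FreeLieAlgebra K (Fin n) := fun m =>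
  Nat.rec ⁅xx K hn, yy K hn⁆ (fun _ ih => ⁅xx K hn, ih⁆) m

lemma gam_zero (hn : 2 ≤ n) : gam K hn 0 = ⁅xx K hn, yy K hn⁆ := rfl
lemma gam_succ (hn : 2 ≤ n) (m : ℕ) : gam K hn (m+1) = ⁅xx K hn, gam K hn m⁆ := rfl

lemma rh_gam (hn : 2 ≤ n) (m : ℕ) : rh K n (gam K hn m) = Tw.sng (m+2) := by
  induction m with
  | zero =>
      rw [gam_zero, LieHom.map_lie, rh_xx, rh_yy]
      exact Tw.lie_sng_sng le_rfl
  | succ m ih =>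
      rw [gam_succ, LieHom.map_lie, rh_xx, ih]
      exact Tw.lie_sng_sng (by omega)

end Free

section Sub

variable (K : Type u) [Field K] (n : ℕ)

/-- the subalgebra `S` generated by the antidiagonal -/
noncomputable abbrev SS : LieSubalgebra K (FreeLieAlgebra K (Fin n) × FreeLieAlgebra K (Fin n)) :=
  LieSubalgebra.lieSpan K (FreeLieAlgebra K (Fin n) × FreeLieAlgebra K (Fin n))
    (Set.range fun x : FreeLieAlgebra K (Fin n) =>
      ((x, -x) : FreeLieAlgebra K (Fin n) × FreeLieAlgebra K (Fin n)))

/-- auxiliary subalgebra on which the cocycle condition can be checked -/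
noncomputable def TT : LieSubalgebra K (FreeLieAlgebra K (Fin n) × FreeLieAlgebra K (Fin n)) where
  carrier := {p | rh K n p.1 0 + rh K n p.2 0 = 0}
  add_mem' := by
    intro p q hp hq
    simp only [Set.mem_setOf_eq] at hp hq
    show rh K n (p+q).1 0 + rh K n (p+q).2 0 = 0
    rw [Prod.fst_add, Prod.snd_add, map_add, map_add,
      Tw.add_apply, Tw.add_apply]
    linear_combination hp + hq
  zero_mem' := by simp
  smul_mem' := by
    intro t p hp
    simp only [Set.mem_setOf_eq] at hp
    show rh K n (t • p).1 0 + rh K n (t • p).2 0 = 0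
    rw [Prod.smul_fst, Prod.smul_snd, map_smul, map_smul,
      Tw.smul_apply, Tw.smul_apply, ← mul_add, hp, mul_zero]
  lie_mem' := by
    intro p q hp hq
    show rh K n (⁅p, q⁆ : FreeLieAlgebra K (Fin n) × FreeLieAlgebra K (Fin n)).1 0
      + rh K n (⁅p, q⁆ : FreeLieAlgebra K (Fin n) × FreeLieAlgebra K (Fin n)).2 0 = 0
    have h1 : (⁅p, q⁆ : FreeLieAlgebra K (Fin n) × FreeLieAlgebra K (Fin n)).1 = ⁅p.1, q.1⁆ := rfl
    have h2 : (⁅p, q⁆ : FreeLieAlgebra K (Fin n) × FreeLieAlgebra K (Fin n)).2 = ⁅p.2, q.2⁆ := rfl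
    simp only [Set.mem_setOf_eq, h1, h2, LieHom.map_lie, Tw.lie_apply_zero, add_zero]

lemma SS_le_TT : SS K n ≤ TT K n := by
  rw [LieSubalgebra.lieSpan_le]
  rintro p ⟨x, rfl⟩
  show rh K n x 0 + rh K n (-x) 0 = 0
  rw [map_neg]
  show rh K n x 0 + (-(rh K n x)) 0 = 0
  rw [Tw.neg_apply, add_neg_cancel]

lemma mem_SS_antidiag (x : FreeLieAlgebra K (Fin n)) : (x, -x) ∈ SS K n :=
  LieSubalgebra.subset_lieSpan ⟨x, rfl⟩

variable {K n}


/-- `(⁅u,v⁆, 0)` belongs to `S`. -/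
lemma mem_SS_left (hchar : ringChar K ≠ 2) (u v : FreeLieAlgebra K (Fin n)) :
    ((⁅u, v⁆, 0) : FreeLieAlgebra K (Fin n) × FreeLieAlgebra K (Fin n)) ∈ SS K n := by
  have h1 : (⁅(u, -u), (v, -v)⁆ : FreeLieAlgebra K (Fin n) × FreeLieAlgebra K (Fin n))
      = (⁅u, v⁆, ⁅u, v⁆) := by
    have : (⁅(u, -u), (v, -v)⁆ : FreeLieAlgebra K (Fin n) × FreeLieAlgebra K (Fin n))
        = (⁅u, v⁆, ⁅-u, -v⁆) := rfl
    rw [this, neg_lie, lie_neg, neg_neg]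
  have hb : (⁅(u, -u), (v, -v)⁆ : FreeLieAlgebra K (Fin n) × FreeLieAlgebra K (Fin n)) ∈ SS K n :=
    (SS K n).lie_mem (mem_SS_antidiag K n u) (mem_SS_antidiag K n v)
  have ha : ((⁅u, v⁆, -⁅u, v⁆) : FreeLieAlgebra K (Fin n) × FreeLieAlgebra K (Fin n)) ∈ SS K n :=
    mem_SS_antidiag K n ⁅u, v⁆
  have hsum := (SS K n).add_mem (h1 ▸ hb) ha
  have hs := (SS K n).smul_mem ((2:K)⁻¹) hsum
  have hkey : ((2:K)⁻¹) • (((⁅u, v⁆, ⁅u, v⁆) : FreeLieAlgebra K (Fin n) × FreeLieAlgebra K (Fin n))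
      + (⁅u, v⁆, -⁅u, v⁆)) = ((⁅u, v⁆, 0) : FreeLieAlgebra K (Fin n) × FreeLieAlgebra K (Fin n)) := by
    have h2 : ((2:K) : K) ≠ 0 := Ring.two_ne_zero hchar
    refine Prod.ext ?_ ?_
    · show (2:K)⁻¹ • (⁅u, v⁆ + ⁅u, v⁆) = ⁅u, v⁆
      rw [← two_smul K (⁅u, v⁆ : FreeLieAlgebra K (Fin n)), smul_smul,
        inv_mul_cancel₀ h2, one_smul]
    · show (2:K)⁻¹ • (⁅u, v⁆ + -⁅u, v⁆) = 0
      rw [add_neg_cancel, smul_zero]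
  rw [← hkey]
  exact hs

/-- `(0, ⁅u,v⁆)` belongs to `S`. -/
lemma mem_SS_right (hchar : ringChar K ≠ 2) (u v : FreeLieAlgebra K (Fin n)) :
    ((0, ⁅u, v⁆) : FreeLieAlgebra K (Fin n) × FreeLieAlgebra K (Fin n)) ∈ SS K n := by
  have h1 : (⁅(u, -u), (v, -v)⁆ : FreeLieAlgebra K (Fin n) × FreeLieAlgebra K (Fin n))
      = (⁅u, v⁆, ⁅u, v⁆) := by
    have : (⁅(u, -u), (v, -v)⁆ : FreeLieAlgebra K (Fin n) × FreeLieAlgebra K (Fin n))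
        = (⁅u, v⁆, ⁅-u, -v⁆) := rfl
    rw [this, neg_lie, lie_neg, neg_neg]
  have hb : (⁅(u, -u), (v, -v)⁆ : FreeLieAlgebra K (Fin n) × FreeLieAlgebra K (Fin n)) ∈ SS K n :=
    (SS K n).lie_mem (mem_SS_antidiag K n u) (mem_SS_antidiag K n v)
  have ha : ((⁅u, v⁆, -⁅u, v⁆) : FreeLieAlgebra K (Fin n) × FreeLieAlgebra K (Fin n)) ∈ SS K n :=
    mem_SS_antidiag K n ⁅u, v⁆
  have hsum := (SS K n).sub_mem (h1 ▸ hb) ha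
  have hs := (SS K n).smul_mem ((2:K)⁻¹) hsum
  have hkey : ((2:K)⁻¹) • (((⁅u, v⁆, ⁅u, v⁆) : FreeLieAlgebra K (Fin n) × FreeLieAlgebra K (Fin n))
      - (⁅u, v⁆, -⁅u, v⁆)) = ((0, ⁅u, v⁆) : FreeLieAlgebra K (Fin n) × FreeLieAlgebra K (Fin n)) := by
    have h2 : ((2:K) : K) ≠ 0 := Ring.two_ne_zero hchar
    refine Prod.ext ?_ ?_
    · show (2:K)⁻¹ • (⁅u, v⁆ - ⁅u, v⁆) = 0
      rw [sub_self, smul_zero]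
    · show (2:K)⁻¹ • (⁅u, v⁆ - -⁅u, v⁆) = ⁅u, v⁆
      rw [sub_neg_eq_add, ← two_smul K (⁅u, v⁆ : FreeLieAlgebra K (Fin n)), smul_smul,
        inv_mul_cancel₀ h2, one_smul]
  rw [← hkey]
  exact hs

end Sub

section Om

variable {K : Type u} [Field K] {n : ℕ}

noncomputable def cA (u : ↥(SS K n)) : Tw K := rh K n (u.val).1
noncomputable def cB (u : ↥(SS K n)) : Tw K := rh K n (u.val).2

lemma cA_add (u v : ↥(SS K n)) : cA (u + v) = cA u + cA v := by
  rw [cA, cA, cA]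
  have h : ((u + v : ↥(SS K n)) : FreeLieAlgebra K (Fin n) × FreeLieAlgebra K (Fin n))
      = u.val + v.val := rfl
  rw [h, Prod.fst_add, map_add]

lemma cB_add (u v : ↥(SS K n)) : cB (u + v) = cB u + cB v := by
  rw [cB, cB, cB]
  have h : ((u + v : ↥(SS K n)) : FreeLieAlgebra K (Fin n) × FreeLieAlgebra K (Fin n))
      = u.val + v.val := rfl
  rw [h, Prod.snd_add, map_add]

lemma cA_smul (t : K) (u : ↥(SS K n)) : cA (t • u) = t • cA u := by
  rw [cA, cA]
  have h : ((t • u : ↥(SS K n)) : FreeLieAlgebra K (Fin n) × FreeLieAlgebra K (Fin n))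
      = t • u.val := rfl
  rw [h, Prod.smul_fst, map_smul]

lemma cB_smul (t : K) (u : ↥(SS K n)) : cB (t • u) = t • cB u := by
  rw [cB, cB]
  have h : ((t • u : ↥(SS K n)) : FreeLieAlgebra K (Fin n) × FreeLieAlgebra K (Fin n))
      = t • u.val := rfl
  rw [h, Prod.smul_snd, map_smul]

lemma cA_neg (u : ↥(SS K n)) : cA (-u) = - cA u := by
  rw [cA, cA]
  have h : ((-u : ↥(SS K n)) : FreeLieAlgebra K (Fin n) × FreeLieAlgebra K (Fin n))
      = - u.val := rfl
  rw [h, Prod.fst_neg, map_neg]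

lemma cB_neg (u : ↥(SS K n)) : cB (-u) = - cB u := by
  rw [cB, cB]
  have h : ((-u : ↥(SS K n)) : FreeLieAlgebra K (Fin n) × FreeLieAlgebra K (Fin n))
      = - u.val := rfl
  rw [h, Prod.snd_neg, map_neg]

lemma cA_lie (u v : ↥(SS K n)) : cA ⁅u, v⁆ = ⁅cA u, cA v⁆ := by
  rw [cA, cA, cA]
  have h : ((⁅u, v⁆ : ↥(SS K n)) : FreeLieAlgebra K (Fin n) × FreeLieAlgebra K (Fin n))
      = ⁅u.val, v.val⁆ := rfl
  rw [h]
  show rh K n ⁅u.val.1, v.val.1⁆ = _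
  rw [LieHom.map_lie]

lemma cB_lie (u v : ↥(SS K n)) : cB ⁅u, v⁆ = ⁅cB u, cB v⁆ := by
  rw [cB, cB, cB]
  have h : ((⁅u, v⁆ : ↥(SS K n)) : FreeLieAlgebra K (Fin n) × FreeLieAlgebra K (Fin n))
      = ⁅u.val, v.val⁆ := rfl
  rw [h]
  show rh K n ⁅u.val.2, v.val.2⁆ = _
  rw [LieHom.map_lie]

lemma cB_rel (u : ↥(SS K n)) : cB u 0 = - cA u 0 := by
  have h := SS_le_TT K n u.property
  have h2 : rh K n (u.val).1 0 + rh K n (u.val).2 0 = 0 := h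
  rw [cA, cB]
  linear_combination h2

/-- The 2-cocycle on `S` (depending on a degree parameter `e`). -/
noncomputable def om (e : ℕ) (u v : ↥(SS K n)) : K :=
  Tw.Cf (e+1) (cA u) (cB v) - Tw.Cf (e+1) (cA v) (cB u)

lemma om_swap (e : ℕ) (u v : ↥(SS K n)) : om e u v = - om e v u := by
  rw [om, om]; ring

lemma om_add_left (e : ℕ) (u u' v : ↥(SS K n)) :
    om e (u + u') v = om e u v + om e u' v := by
  rw [om, om, om, cA_add, cB_add, Tw.Cf_add_left, Tw.Cf_add_right]; ring

lemma om_add_right (e : ℕ) (u v v' : ↥(SS K n)) :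
    om e u (v + v') = om e u v + om e u v' := by
  rw [om_swap, om_add_left, om_swap e v u, om_swap e v' u]; ring

lemma om_smul_left (e : ℕ) (t : K) (u v : ↥(SS K n)) :
    om e (t • u) v = t * om e u v := by
  rw [om, om, cA_smul, cB_smul, Tw.Cf_smul_left, Tw.Cf_smul_right]; ring

lemma om_smul_right (e : ℕ) (t : K) (u v : ↥(SS K n)) :
    om e u (t • v) = t * om e u v := by
  rw [om_swap, om_smul_left, om_swap e v u]; ring

lemma om_neg_left (e : ℕ) (u v : ↥(SS K n)) : om e (-u) v = - om e u v := by
  rw [om, om, cA_neg, cB_neg, Tw.Cf_neg_left, Tw.Cf_neg_right]; ring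

lemma om_self (e : ℕ) (u : ↥(SS K n)) : om e u u = 0 := by
  rw [om]; ring

/-- the cocycle identity for `om` on `S`. -/
lemma om_cocycle (e : ℕ) (u v w : ↥(SS K n)) :
    om e ⁅u, v⁆ w + om e ⁅v, w⁆ u + om e ⁅w, u⁆ v = 0 := by
  rw [om, om, om, cA_lie, cA_lie, cA_lie, cB_lie, cB_lie, cB_lie]
  have := Tw.cocyc e (cA u) (cA v) (cA w) (cB u) (cB v) (cB w)
    (cB_rel u) (cB_rel v) (cB_rel w)
  linear_combination this

end Om

section CE

variable {K : Type u} [Field K] {n : ℕ}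

/-- central extension of `S` by `K` determined by the cocycle `om e` -/
def CEx (K : Type u) [Field K] (n : ℕ) (e : ℕ) : Type u := ↥(SS K n) × K

variable {e : ℕ}

noncomputable instance : AddCommGroup (CEx K n e) := inferInstanceAs (AddCommGroup (↥(SS K n) × K))
noncomputable instance : Module K (CEx K n e) := inferInstanceAs (Module K (↥(SS K n) × K))

namespace CEx

noncomputable def mk' (s : ↥(SS K n)) (c : K) : CEx K n e := (s, c)
noncomputable def s (p : CEx K n e) : ↥(SS K n) := (show ↥(SS K n) × K from p).1
noncomputable def c (p : CEx K n e) : K := (show ↥(SS K n) × K from p).2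

@[simp] lemma s_mk (x : ↥(SS K n)) (t : K) : s (mk' x t : CEx K n e) = x := rfl
@[simp] lemma c_mk (x : ↥(SS K n)) (t : K) : c (mk' x t : CEx K n e) = t := rfl
@[simp] lemma s_add (p q : CEx K n e) : s (p + q) = s p + s q := rfl
@[simp] lemma c_add (p q : CEx K n e) : c (p + q) = c p + c q := rfl
@[simp] lemma s_smul (t : K) (p : CEx K n e) : s (t • p) = t • s p := rfl
@[simp] lemma c_smul (t : K) (p : CEx K n e) : c (t • p) = t * c p := rfl

lemma ext' (p q : CEx K n e) (h1 : s p = s q) (h2 : c p = c q) : p = q := by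
  have : (show ↥(SS K n) × K from p) = (show ↥(SS K n) × K from q) := Prod.ext h1 h2
  exact this

noncomputable instance : LieRing (CEx K n e) where
  bracket p q := mk' ⁅s p, s q⁆ (om e (s p) (s q))
  add_lie p q r := by
    refine ext' _ _ ?_ ?_
    · show ⁅s (p+q), s r⁆ = s (mk' ⁅s p, s r⁆ _ + mk' ⁅s q, s r⁆ _)
      rw [s_add, s_add, s_mk, s_mk, add_lie]
    · show om e (s (p+q)) (s r) = c (mk' _ (om e (s p) (s r)) + mk' _ (om e (s q) (s r)))
      rw [s_add, c_add, c_mk, c_mk, om_add_left]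
  lie_add p q r := by
    refine ext' _ _ ?_ ?_
    · show ⁅s p, s (q+r)⁆ = s (mk' ⁅s p, s q⁆ _ + mk' ⁅s p, s r⁆ _)
      rw [s_add, s_add, s_mk, s_mk, lie_add]
    · show om e (s p) (s (q+r)) = c (mk' _ (om e (s p) (s q)) + mk' _ (om e (s p) (s r)))
      rw [s_add, c_add, c_mk, c_mk, om_add_right]
  lie_self p := by
    refine ext' _ _ ?_ ?_
    · show ⁅s p, s p⁆ = s (0 : CEx K n e)
      rw [lie_self]; rfl
    · show om e (s p) (s p) = c (0 : CEx K n e)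
      rw [om_self]; rfl
  leibniz_lie p q r := by
    refine ext' _ _ ?_ ?_
    · show ⁅s p, s (mk' ⁅s q, s r⁆ _)⁆
        = s (mk' ⁅s (mk' ⁅s p, s q⁆ _), s r⁆ _ + mk' ⁅s q, s (mk' ⁅s p, s r⁆ _)⁆ _)
      rw [s_add, s_mk, s_mk, s_mk, s_mk, s_mk]
      exact leibniz_lie _ _ _
    · show om e (s p) (s (mk' ⁅s q, s r⁆ _))
        = c (mk' ⁅s (mk' ⁅s p, s q⁆ _), s r⁆ (om e (s (mk' ⁅s p, s q⁆ _)) (s r))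
            + mk' ⁅s q, s (mk' ⁅s p, s r⁆ _)⁆ (om e (s q) (s (mk' ⁅s p, s r⁆ _))))
      rw [c_add, c_mk, c_mk, s_mk, s_mk, s_mk]
      -- goal : om e (s p) ⁅s q, s r⁆ = om e ⁅s p, s q⁆ (s r) + om e (s q) ⁅s p, s r⁆
      have hc := om_cocycle e (s p) (s q) (s r)
      have h1 : om e (s p) ⁅s q, s r⁆ = - om e ⁅s q, s r⁆ (s p) := om_swap e _ _
      have h2 : om e (s q) ⁅s p, s r⁆ = - om e ⁅s p, s r⁆ (s q) := om_swap e _ _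
      have h4 : om e ⁅s r, s p⁆ (s q) = - om e ⁅s p, s r⁆ (s q) := by
        rw [← lie_skew (s r) (s p), om_neg_left]
      linear_combination h1 - hc + h4 - h2

@[simp] lemma s_lie (p q : CEx K n e) : s ⁅p, q⁆ = ⁅s p, s q⁆ := rfl
@[simp] lemma c_lie (p q : CEx K n e) : c ⁅p, q⁆ = om e (s p) (s q) := rfl

noncomputable instance : LieAlgebra K (CEx K n e) where
  lie_smul t p q := by
    refine ext' _ _ ?_ ?_
    · show ⁅s p, s (t • q)⁆ = s (t • mk' ⁅s p, s q⁆ _)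
      rw [s_smul, s_smul, s_mk, lie_smul]
    · show om e (s p) (s (t • q)) = c (t • mk' ⁅s p, s q⁆ (om e (s p) (s q)))
      rw [s_smul, c_smul, c_mk, om_smul_right]

/-- projection onto `S` -/
noncomputable def prS : CEx K n e →ₗ⁅K⁆ ↥(SS K n) where
  toFun := s
  map_add' := s_add
  map_smul' := s_smul
  map_lie' := rfl

@[simp] lemma prS_apply (p : CEx K n e) : (prS : CEx K n e →ₗ⁅K⁆ ↥(SS K n)) p = s p := rfl

end CEx
end CE

section Lift

variable {K : Type u} [Field K] {n : ℕ} {Xt : Type w}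
variable (π : FreeLieAlgebra K Xt →ₗ⁅K⁆ ↥(SS K n)) (e : ℕ)

/-- lift of `π` to the central extension -/
noncomputable def LL : FreeLieAlgebra K Xt →ₗ⁅K⁆ CEx K n e :=
  FreeLieAlgebra.lift K fun ξ => CEx.mk' (π (FreeLieAlgebra.of K ξ)) 0

lemma prS_LL : ∀ wd, (CEx.prS (K := K) (n := n) (e := e)) (LL π e wd) = π wd := by
  have h : (CEx.prS (K := K) (n := n) (e := e)).comp (LL π e) = π := by
    apply FreeLieAlgebra.hom_ext
    intro ξ
    show CEx.prS ((LL π e) (FreeLieAlgebra.of K ξ)) = π (FreeLieAlgebra.of K ξ)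
    rw [LL, FreeLieAlgebra.lift_of_apply, CEx.prS_apply, CEx.s_mk]
  intro wd
  exact LieHom.congr_fun h wd

/-- the linear functional computing the `K`-component of the lift -/
noncomputable def ell : FreeLieAlgebra K Xt →ₗ[K] K where
  toFun wd := CEx.c (LL π e wd)
  map_add' a b := by
    show CEx.c (LL π e (a + b)) = CEx.c (LL π e a) + CEx.c (LL π e b)
    rw [map_add, CEx.c_add]
  map_smul' t a := by
    show CEx.c (LL π e (t • a)) = t • CEx.c (LL π e a)
    rw [map_smul, CEx.c_smul, smul_eq_mul]

lemma ell_lie (f g : FreeLieAlgebra K Xt) :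
    ell π e ⁅f, g⁆ = om e (π f) (π g) := by
  show CEx.c (LL π e ⁅f, g⁆) = _
  rw [LieHom.map_lie, CEx.c_lie]
  rw [show CEx.s (LL π e f) = π f from prS_LL π e f,
    show CEx.s (LL π e g) = π g from prS_LL π e g]

end Lift

section Ker

variable {K : Type u} [Field K] {n : ℕ} {Xt : Type w}
variable (π : FreeLieAlgebra K Xt →ₗ⁅K⁆ ↥(SS K n)) (e : ℕ)

lemma om_zero_right (u : ↥(SS K n)) : om e u 0 = 0 := by
  have hA : cA (0 : ↥(SS K n)) = 0 := by
    rw [cA]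
    show rh K n ((0 : FreeLieAlgebra K (Fin n) × FreeLieAlgebra K (Fin n))).1 = 0
    rw [Prod.fst_zero, map_zero]
  have hB : cB (0 : ↥(SS K n)) = 0 := by
    rw [cB]
    show rh K n ((0 : FreeLieAlgebra K (Fin n) × FreeLieAlgebra K (Fin n))).2 = 0
    rw [Prod.snd_zero, map_zero]
  rw [om, hA, hB, Tw.Cf_zero_left, Tw.Cf_zero_right, sub_zero]

lemma lie_top_ker_le :
    (⁅(⊤ : LieIdeal K (FreeLieAlgebra K Xt)), π.ker⁆ : LieIdeal K (FreeLieAlgebra K Xt))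
      ≤ (LL π e).ker := by
  rw [LieSubmodule.lieIdeal_oper_eq_span, LieSubmodule.lieSpan_le]
  rintro m ⟨x, nn, rfl⟩
  rw [SetLike.mem_coe, LieHom.mem_ker, LieHom.map_lie]
  have hs : CEx.s (LL π e (nn : FreeLieAlgebra K Xt)) = 0 := by
    have h := prS_LL π e (nn : FreeLieAlgebra K Xt)
    rw [CEx.prS_apply] at h
    rw [h]
    exact LieHom.mem_ker.mp nn.property
  refine CEx.ext' _ _ ?_ ?_
  · rw [CEx.s_lie, hs, lie_zero]; rfl
  · rw [CEx.c_lie, hs, om_zero_right]; rfl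

lemma toSubmodule_le_ker_ell :
    LieSubmodule.toSubmodule
        (⁅(⊤ : LieIdeal K (FreeLieAlgebra K Xt)), π.ker⁆ : LieIdeal K (FreeLieAlgebra K Xt))
      ≤ LinearMap.ker (ell π e) := by
  intro x hx
  have hx2 : x ∈ (LL π e).ker := lie_top_ker_le π e hx
  rw [LieHom.mem_ker] at hx2
  rw [LinearMap.mem_ker]
  show CEx.c (LL π e x) = 0
  rw [hx2]
  rfl

/-- the induced functional on the Hopf-formula quotient -/
noncomputable def lam :
    (FreeLieAlgebra K Xt ⧸
      LieSubmodule.toSubmodule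
        (⁅(⊤ : LieIdeal K (FreeLieAlgebra K Xt)), π.ker⁆ : LieIdeal K (FreeLieAlgebra K Xt)))
      →ₗ[K] K :=
  Submodule.liftQ _ (ell π e) (toSubmodule_le_ker_ell π e)

end Ker

section Elts

variable {K : Type u} [Field K] {n : ℕ}
/-- `( ⁅x,y⁆, 0 )` as an element of `S`. -/
noncomputable def elt1 (hchar : ringChar K ≠ 2) (hn : 2 ≤ n) : ↥(SS K n) :=
  ⟨(⁅xx K hn, yy K hn⁆, 0), mem_SS_left hchar (xx K hn) (yy K hn)⟩

lemma mem_SS_gam (hchar : ringChar K ≠ 2) (hn : 2 ≤ n) (m : ℕ) : ((0, gam K hn m) :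
    FreeLieAlgebra K (Fin n) × FreeLieAlgebra K (Fin n)) ∈ SS K n := by
  cases m with
  | zero => rw [gam_zero]; exact mem_SS_right hchar _ _
  | succ m => rw [gam_succ]; exact mem_SS_right hchar _ _

/-- `( 0, γ_{j+2} )` as an element of `S`. -/
noncomputable def elt2 (hchar : ringChar K ≠ 2) (hn : 2 ≤ n) (j : ℕ) : ↥(SS K n) :=
  ⟨(0, gam K hn (j+2)), mem_SS_gam hchar hn (j+2)⟩

lemma lie_elt1_elt2 (hchar : ringChar K ≠ 2) (hn : 2 ≤ n) (j : ℕ) : (⁅elt1 hchar hn, elt2 hchar hn j⁆ : ↥(SS K n)) = 0 := by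
  apply Subtype.ext
  show (⁅((⁅xx K hn, yy K hn⁆, 0) : FreeLieAlgebra K (Fin n) × FreeLieAlgebra K (Fin n)),
    ((0, gam K hn (j+2)) : FreeLieAlgebra K (Fin n) × FreeLieAlgebra K (Fin n))⁆ :
    FreeLieAlgebra K (Fin n) × FreeLieAlgebra K (Fin n)) = 0
  have h : (⁅((⁅xx K hn, yy K hn⁆, 0) : FreeLieAlgebra K (Fin n) × FreeLieAlgebra K (Fin n)),
      ((0, gam K hn (j+2)) : FreeLieAlgebra K (Fin n) × FreeLieAlgebra K (Fin n))⁆ :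
      FreeLieAlgebra K (Fin n) × FreeLieAlgebra K (Fin n))
      = (⁅⁅xx K hn, yy K hn⁆, (0 : FreeLieAlgebra K (Fin n))⁆,
         ⁅(0 : FreeLieAlgebra K (Fin n)), gam K hn (j+2)⁆) := rfl
  rw [h, lie_zero, zero_lie]
  rfl

lemma cA_elt1 (hchar : ringChar K ≠ 2) (hn : 2 ≤ n) : cA (elt1 hchar hn : ↥(SS K n)) = Tw.sng 2 := by
  rw [cA, elt1]
  show rh K n ⁅xx K hn, yy K hn⁆ = Tw.sng 2
  rw [LieHom.map_lie, rh_xx, rh_yy]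
  exact Tw.lie_sng_sng le_rfl

lemma cB_elt1 (hchar : ringChar K ≠ 2) (hn : 2 ≤ n) : cB (elt1 hchar hn : ↥(SS K n)) = 0 := by
  rw [cB, elt1]
  show rh K n (0 : FreeLieAlgebra K (Fin n)) = 0
  rw [map_zero]

lemma cA_elt2 (hchar : ringChar K ≠ 2) (hn : 2 ≤ n) (j : ℕ) : cA (elt2 hchar hn j : ↥(SS K n)) = 0 := by
  rw [cA, elt2]
  show rh K n (0 : FreeLieAlgebra K (Fin n)) = 0
  rw [map_zero]

lemma cB_elt2 (hchar : ringChar K ≠ 2) (hn : 2 ≤ n) (j : ℕ) : cB (elt2 hchar hn j : ↥(SS K n)) = Tw.sng (j+4) := by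
  rw [cB, elt2]
  show rh K n (gam K hn (j+2)) = Tw.sng (j+4)
  rw [rh_gam]

lemma om_elt (hchar : ringChar K ≠ 2) (hn : 2 ≤ n) (e j : ℕ) (he : 1 ≤ e) :
    om e (elt1 hchar hn : ↥(SS K n)) (elt2 hchar hn j) = if e = j + 4 then 1 else 0 := by
  rw [om, cA_elt1 hchar hn, cB_elt1 hchar hn, cA_elt2 hchar hn, cB_elt2 hchar hn, Tw.Cf_zero_left, sub_zero]
  -- Cf (e+1) (sng 2) (sng (j+4))
  rw [Tw.Cf]
  rw [Finset.sum_eq_single 1]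
  · rw [show (1:ℕ)+1 = 2 from rfl, Tw.sng_apply_self]
    rw [show e+1-1 = e from rfl, one_mul]
    by_cases h : e = j + 4
    · subst h; rw [Tw.sng_apply_self, if_pos rfl]
    · rw [Tw.sng_apply_ne h, if_neg h]
  · intro b _ hb
    rw [Tw.sng_apply_ne (by omega), zero_mul]
  · intro h1
    exact absurd (Finset.mem_range.mpr (by omega)) h1

end Elts

section Final

variable {K : Type u} [Field K] {n : ℕ} {Xt : Type w}

lemma pairing (hchar : ringChar K ≠ 2) (hn : 2 ≤ n)
    (π : FreeLieAlgebra K Xt →ₗ⁅K⁆ ↥(SS K n))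
    (f g : FreeLieAlgebra K Xt) (i j : ℕ)
    (hf : π f = elt1 hchar hn) (hg : π g = elt2 hchar hn j) :
    ell π (i+4) ⁅f, g⁆ = if i = j then (1:K) else 0 := by
  rw [ell_lie, hf, hg, om_elt hchar hn (i+4) j (by omega)]
  by_cases h : i = j
  · subst h; rw [if_pos rfl, if_pos rfl]
  · rw [if_neg h, if_neg (by omega)]

theorem main (K : Type u) [Field K] (hchar : ringChar K ≠ 2) (n : ℕ) (hn : 2 ≤ n) :
    ∀ (X : Type w)
      (π : FreeLieAlgebra K X →ₗ⁅K⁆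
        ↥(LieSubalgebra.lieSpan K (FreeLieAlgebra K (Fin n) × FreeLieAlgebra K (Fin n))
            (Set.range fun x : FreeLieAlgebra K (Fin n) =>
              ((x, -x) : FreeLieAlgebra K (Fin n) × FreeLieAlgebra K (Fin n))))),
      Function.Surjective π → ¬ FiniteDimensional K ↥(hopfH2 K π.ker) := by
  intro Xt π hπ hFD
  classical
  obtain ⟨f, hf⟩ := hπ (elt1 hchar hn)
  choose g hg using fun j => hπ (elt2 hchar hn j)
  set J := LieSubmodule.toSubmodule
    (⁅(⊤ : LieIdeal K (FreeLieAlgebra K Xt)), π.ker⁆ : LieIdeal K (FreeLieAlgebra K Xt)) with hJ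
  have hker : ∀ j, (⁅f, g j⁆ : FreeLieAlgebra K Xt) ∈ π.ker := by
    intro j
    rw [LieHom.mem_ker, LieHom.map_lie, hf, hg, lie_elt1_elt2 hchar hn j]
  have hder : ∀ j, (⁅f, g j⁆ : FreeLieAlgebra K Xt) ∈
      (⁅(⊤ : LieIdeal K (FreeLieAlgebra K Xt)), (⊤ : LieIdeal K (FreeLieAlgebra K Xt))⁆ :
        LieIdeal K (FreeLieAlgebra K Xt)) := fun j =>
    LieSubmodule.lie_mem_lie (LieSubmodule.mem_top _) (LieSubmodule.mem_top _)
  have hmem : ∀ j, J.mkQ ⁅f, g j⁆ ∈ hopfH2 K π.ker := by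
    intro j
    refine Submodule.mem_map_of_mem ?_
    rw [LieSubmodule.mem_toSubmodule, LieSubmodule.mem_inf]
    exact ⟨hder j, hker j⟩
  set v : ℕ → ↥(hopfH2 K π.ker) := fun j => ⟨J.mkQ ⁅f, g j⁆, hmem j⟩ with hv
  have heval : ∀ i j : ℕ,
      lam π (i+4) ((hopfH2 K π.ker).subtype (v j)) = if i = j then (1:K) else 0 := by
    intro i j
    have h1 : (hopfH2 K π.ker).subtype (v j) = J.mkQ ⁅f, g j⁆ := rfl
    rw [h1, lam, Submodule.mkQ_apply, Submodule.liftQ_apply]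
    exact pairing hchar hn π f (g j) i j hf (hg j)
  have hli : LinearIndependent K v := by
    rw [linearIndependent_iff']
    intro s g0 hsum i hi
    have happ := congrArg (fun z => lam π (i+4) ((hopfH2 K π.ker).subtype z)) hsum
    simp only [map_sum, map_smul, map_zero] at happ
    rw [Finset.sum_eq_single i] at happ
    · rw [heval i i, if_pos rfl, smul_eq_mul, mul_one] at happ
      exact happ
    · intro b _ hb
      rw [heval i b, if_neg (Ne.symm hb), smul_eq_mul, mul_zero]
    · intro h1; exact absurd hi h1
  have hcard := hli.lt_aleph0_of_finite
  rw [Cardinal.mk_nat] at hcard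
  exact absurd hcard (lt_irrefl _)

end Final
end WkComm

/-- Let `f` be a non-abelian free Lie algebra of finite rank (i.e. of rank
`n ≥ 2`) and let `S ⊆ f ⊕ f` be the Lie subalgebra generated by the elements `(x, -x)`.
Then `H₂(S; K)` (computed by the Hopf formula from any free presentation of `S`) is
infinite dimensional. -/
theorem H2_of_antidiagonal_in_free_not_finiteDimensional
    (K : Type u) [Field K] (hchar : ringChar K ≠ 2) (n : ℕ) (hn : 2 ≤ n) :
    ∀ (X : Type w)
      (π : FreeLieAlgebra K X →ₗ⁅K⁆
        ↥(LieSubalgebra.lieSpan K (FreeLieAlgebra K (Fin n) × FreeLieAlgebra K (Fin n))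
            (Set.range fun x : FreeLieAlgebra K (Fin n) =>
              ((x, -x) : FreeLieAlgebra K (Fin n) × FreeLieAlgebra K (Fin n))))),
      Function.Surjective π → ¬ FiniteDimensional K ↥(hopfH2 K π.ker) :=
  WkComm.main K hchar n hn
end
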